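/- arXiv:1809.11012 — 5 statements merged into one kernel-verified Lean document; each statement's English description precedes it below -/
import Mathlib

section
/- Let κ, c_s, c_p > 0, let D ⊆ ℝ² be open, and let u : D × [0,∞) → ℝ² satisfy: (i) for each x ∈ D, t ↦ u(x,t) is twice continuously differentiable with u(x,0) = 0 and ∂_t u(x,0) = 0; (ii) for each x ∈ D, each j ∈ {0,1,2} and each k ∈ ℕ, the function t ↦ e^{−κt} t^k ∂_t^j u(x,t) is integrable on (0,∞), and for j ∈ {0,1} it tends to 0 as t → ∞; (iii) for each t > 0, u(·,t) is twice continuously differentiable on D and ∂_t² u(x,t) = Δ*u(x,t) for all (x,t) ∈ D × (0,∞); (iv) for each n ∈ ℕ, the Fourier–Laguerre coefficient u_n(x) = ∫_0^∞ e^{−κt} L_n(κt) u(x,t) dt is twice continuously differentiable on D and satisfies Δ*u_n(x) = ∫_0^∞ e^{−κt} L_n(κt) (Δ*u)(x,t) dt for all x ∈ D. Then for every n ∈ ℕ and all x ∈ D one has Δ*u_n(x) − κ² u_n(x) = ∑_{m=0}^{n−1} κ²(n−m+1) u_m(x). -/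
open Real Filter MeasureTheory


/-- Laguerre polynomial L_n(x) = ∑_{k=0}^n (−1)^k (n choose k) x^k / k! -/
noncomputable def lagPoly (n : ℕ) (x : ℝ) : ℝ :=
  ∑ k ∈ Finset.range (n + 1), (-1 : ℝ) ^ k * (n.choose k : ℝ) * x ^ k / (k.factorial : ℝ)

/-- partial derivative ∂_i of a scalar field on ℝ² = Fin 2 → ℝ -/
noncomputable def pd (i : Fin 2) (g : (Fin 2 → ℝ) → ℝ) (x : Fin 2 → ℝ) : ℝ :=
  fderiv ℝ g x (Pi.single i 1)

/-- the Lamé operator Δ* v = c_s² Δ v + (c_p² − c_s²) ∇ (div v) -/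
noncomputable def lame (cs cp : ℝ) (v : (Fin 2 → ℝ) → (Fin 2 → ℝ)) (x : Fin 2 → ℝ) :
    Fin 2 → ℝ :=
  fun j =>
    cs ^ 2 * (pd 0 (pd 0 (fun y => v y j)) x + pd 1 (pd 1 (fun y => v y j)) x)
      + (cp ^ 2 - cs ^ 2) *
          pd j (fun y => pd 0 (fun z => v z 0) y + pd 1 (fun z => v z 1) y) x

/-- Fourier–Laguerre coefficient u_n(x) = ∫₀^∞ e^{−κt} L_n(κt) u(x,t) dt -/
noncomputable def lagCoeff (κ : ℝ) (u : (Fin 2 → ℝ) → ℝ → (Fin 2 → ℝ)) (n : ℕ)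
    (x : Fin 2 → ℝ) : Fin 2 → ℝ :=
  ∫ t in Set.Ioi (0 : ℝ), (Real.exp (-κ * t) * lagPoly n (κ * t)) • u x t

/-- formal derivative of the Laguerre polynomial -/
noncomputable def lagPolyD (n : ℕ) (x : ℝ) : ℝ :=
  ∑ j ∈ Finset.range n, (-1 : ℝ) ^ (j + 1) * (n.choose (j + 1) : ℝ) * x ^ j / (j.factorial : ℝ)

lemma hasDerivAt_lagPoly (n : ℕ) (x : ℝ) : HasDerivAt (lagPoly n) (lagPolyD n x) x := by
  have h : ∀ k : ℕ,
      HasDerivAt (fun y : ℝ => (-1 : ℝ) ^ k * (n.choose k : ℝ) * y ^ k / (k.factorial : ℝ))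
        ((-1 : ℝ) ^ k * (n.choose k : ℝ) * ((k : ℝ) * x ^ (k - 1)) / (k.factorial : ℝ)) x := by
    intro k
    simpa [mul_comm, mul_assoc, mul_div_assoc] using
      ((hasDerivAt_pow k x).const_mul ((-1 : ℝ) ^ k * (n.choose k : ℝ))).div_const
        (k.factorial : ℝ)
  have H := HasDerivAt.fun_sum (fun k (_ : k ∈ Finset.range (n + 1)) => h k)
  have hval : ∑ k ∈ Finset.range (n + 1),
      (-1 : ℝ) ^ k * (n.choose k : ℝ) * ((k : ℝ) * x ^ (k - 1)) / (k.factorial : ℝ)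
      = lagPolyD n x := by
    rw [Finset.sum_range_succ']
    simp only [Nat.cast_zero, zero_mul, mul_zero, zero_div, add_zero]
    refine Finset.sum_congr rfl fun j _ => ?_
    rw [Nat.factorial_succ, Nat.add_sub_cancel]
    push_cast
    have hj : (j.factorial : ℝ) ≠ 0 := Nat.cast_ne_zero.mpr j.factorial_ne_zero
    have hj1 : ((j : ℝ) + 1) ≠ 0 := by positivity
    field_simp
  rw [← hval]
  exact H

lemma lagPolyD_succ (n : ℕ) (x : ℝ) : lagPolyD (n + 1) x = lagPolyD n x - lagPoly n x := by
  unfold lagPolyD lagPoly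
  rw [Finset.sum_range_succ, Finset.sum_range_succ]
  have h : ∀ j ∈ Finset.range n,
      (-1 : ℝ) ^ (j + 1) * ((n + 1).choose (j + 1) : ℝ) * x ^ j / (j.factorial : ℝ)
        = (-1 : ℝ) ^ (j + 1) * (n.choose (j + 1) : ℝ) * x ^ j / (j.factorial : ℝ)
          - (-1 : ℝ) ^ j * (n.choose j : ℝ) * x ^ j / (j.factorial : ℝ) := by
    intro j _
    rw [Nat.choose_succ_succ]
    push_cast
    ring
  rw [Finset.sum_congr rfl h, Finset.sum_sub_distrib]
  simp [Nat.choose_self]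
  ring

lemma lagPolyD_eq (n : ℕ) (x : ℝ) : lagPolyD n x = -∑ m ∈ Finset.range n, lagPoly m x := by
  induction n with
  | zero => simp [lagPolyD]
  | succ n ih => rw [lagPolyD_succ, ih, Finset.sum_range_succ]; ring

/-- the function `t ↦ e^{-κt} L_n(κ t)` -/
noncomputable def lphi (κ : ℝ) (n : ℕ) (t : ℝ) : ℝ := Real.exp (-κ * t) * lagPoly n (κ * t)

/-- its derivative -/
noncomputable def lphi1 (κ : ℝ) (n : ℕ) (t : ℝ) : ℝ :=
  -κ * (lphi κ n t + ∑ m ∈ Finset.range n, lphi κ m t)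

/-- its second derivative -/
noncomputable def lphi2 (κ : ℝ) (n : ℕ) (t : ℝ) : ℝ :=
  -κ * (lphi1 κ n t + ∑ m ∈ Finset.range n, lphi1 κ m t)

lemma hasDerivAt_lphi (κ : ℝ) (n : ℕ) (t : ℝ) :
    HasDerivAt (lphi κ n) (lphi1 κ n t) t := by
  have h1 : HasDerivAt (fun t : ℝ => Real.exp (-κ * t)) (-κ * Real.exp (-κ * t)) t := by
    simpa [mul_comm] using ((hasDerivAt_id t).const_mul (-κ)).exp
  have hk : HasDerivAt (fun y : ℝ => κ * y) κ t := by
    simpa using (hasDerivAt_id t).const_mul κ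
  have h2 : HasDerivAt (fun t : ℝ => lagPoly n (κ * t)) (lagPolyD n (κ * t) * κ) t :=
    HasDerivAt.comp t (hasDerivAt_lagPoly n (κ * t)) hk
  have h3 := h1.mul h2
  have hval : -κ * Real.exp (-κ * t) * lagPoly n (κ * t)
      + Real.exp (-κ * t) * (lagPolyD n (κ * t) * κ) = lphi1 κ n t := by
    rw [lagPolyD_eq]
    simp only [lphi1, lphi]
    rw [← Finset.mul_sum]
    ring
  rw [← hval]
  exact h3

set_option maxHeartbeats 1000000 in
lemma hasDerivAt_lphi1 (κ : ℝ) (n : ℕ) (t : ℝ) :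
    HasDerivAt (lphi1 κ n) (lphi2 κ n t) t := by
  have hd : ∀ m : ℕ, HasDerivAt (lphi κ m) (lphi1 κ m t) t := fun m => hasDerivAt_lphi κ m t
  have h := ((hd n).add
    (HasDerivAt.fun_sum (fun m (_ : m ∈ Finset.range n) => hd m))).const_mul (-κ)
  unfold lphi2
  exact h

lemma lphi_smul_int (κ : ℝ) {v : ℝ → Fin 2 → ℝ}
    (hv : ∀ k : ℕ, MeasureTheory.IntegrableOn
      (fun t => (Real.exp (-κ * t) * t ^ k) • v t) (Set.Ioi 0)) (n : ℕ) :
    MeasureTheory.IntegrableOn (fun t => lphi κ n t • v t) (Set.Ioi 0) := by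
  have hfun : (fun t => lphi κ n t • v t) = fun t => ∑ k ∈ Finset.range (n + 1),
      ((-1 : ℝ) ^ k * (n.choose k : ℝ) * κ ^ k / (k.factorial : ℝ)) •
        ((Real.exp (-κ * t) * t ^ k) • v t) := by
    funext t
    simp only [lphi, lagPoly, Finset.mul_sum, Finset.sum_smul, smul_smul]
    refine Finset.sum_congr rfl fun k _ => ?_
    congr 1
    ring
  rw [hfun]
  refine MeasureTheory.integrable_finset_sum _ fun k _ => ?_
  exact (hv k).smul ((-1 : ℝ) ^ k * (n.choose k : ℝ) * κ ^ k / (k.factorial : ℝ))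

lemma lphi_smul_lim (κ : ℝ) {v : ℝ → Fin 2 → ℝ}
    (hv : ∀ k : ℕ, Filter.Tendsto
      (fun t => (Real.exp (-κ * t) * t ^ k) • v t) Filter.atTop (nhds 0)) (n : ℕ) :
    Filter.Tendsto (fun t => lphi κ n t • v t) Filter.atTop (nhds 0) := by
  have hfun : (fun t => lphi κ n t • v t) = fun t => ∑ k ∈ Finset.range (n + 1),
      ((-1 : ℝ) ^ k * (n.choose k : ℝ) * κ ^ k / (k.factorial : ℝ)) •
        ((Real.exp (-κ * t) * t ^ k) • v t) := by
    funext t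
    simp only [lphi, lagPoly, Finset.mul_sum, Finset.sum_smul, smul_smul]
    refine Finset.sum_congr rfl fun k _ => ?_
    congr 1
    ring
  rw [hfun]
  have h := tendsto_finset_sum (Finset.range (n + 1))
    (fun k (_ : k ∈ Finset.range (n + 1)) => (hv k).const_smul
      ((-1 : ℝ) ^ k * (n.choose k : ℝ) * κ ^ k / (k.factorial : ℝ)))
  simpa using h

lemma comb_int {v : ℝ → Fin 2 → ℝ} {p : ℕ → ℝ → ℝ}
    (hp : ∀ m, MeasureTheory.IntegrableOn (fun t => p m t • v t) (Set.Ioi 0))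
    (c : ℝ) (n : ℕ) :
    MeasureTheory.IntegrableOn
      (fun t => (c * (p n t + ∑ m ∈ Finset.range n, p m t)) • v t) (Set.Ioi 0) := by
  have hfun : (fun t => (c * (p n t + ∑ m ∈ Finset.range n, p m t)) • v t)
      = fun t => c • (p n t • v t) + ∑ m ∈ Finset.range n, c • (p m t • v t) := by
    funext t
    simp [mul_add, add_smul, Finset.mul_sum, Finset.sum_smul, mul_smul]
  rw [hfun]
  exact ((hp n).smul c).add (MeasureTheory.integrable_finset_sum _ fun m _ => (hp m).smul c)

lemma comb_lim {v : ℝ → Fin 2 → ℝ} {p : ℕ → ℝ → ℝ}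
    (hp : ∀ m, Filter.Tendsto (fun t => p m t • v t) Filter.atTop (nhds 0))
    (c : ℝ) (n : ℕ) :
    Filter.Tendsto
      (fun t => (c * (p n t + ∑ m ∈ Finset.range n, p m t)) • v t) Filter.atTop (nhds 0) := by
  have hfun : (fun t => (c * (p n t + ∑ m ∈ Finset.range n, p m t)) • v t)
      = fun t => c • (p n t • v t) + ∑ m ∈ Finset.range n, c • (p m t • v t) := by
    funext t
    simp [mul_add, add_smul, Finset.mul_sum, Finset.sum_smul, mul_smul]
  rw [hfun]
  have h := ((hp n).const_smul c).add
    (tendsto_finset_sum (Finset.range n) fun m (_ : m ∈ Finset.range n) => (hp m).const_smul c)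
  simpa using h

lemma ibp_Ioi {f f' : ℝ → ℝ} {v v' : ℝ → Fin 2 → ℝ}
    (hf : ∀ t : ℝ, HasDerivAt f (f' t) t)
    (hv : ∀ t ∈ Set.Ici (0 : ℝ), HasDerivWithinAt v (v' t) (Set.Ici 0) t)
    (hv0 : v 0 = 0)
    (h1 : MeasureTheory.IntegrableOn (fun t => f' t • v t) (Set.Ioi 0))
    (h2 : MeasureTheory.IntegrableOn (fun t => f t • v' t) (Set.Ioi 0))
    (hl : Filter.Tendsto (fun t => f t • v t) Filter.atTop (nhds 0)) :
    ∫ t in Set.Ioi (0 : ℝ), f' t • v t = -∫ t in Set.Ioi (0 : ℝ), f t • v' t := by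
  have hderiv : ∀ t ∈ Set.Ioi (0 : ℝ),
      HasDerivAt (fun t => f t • v t) (f t • v' t + f' t • v t) t := by
    intro t ht
    exact (hf t).smul ((hv t (Set.mem_Ici.mpr (le_of_lt ht))).hasDerivAt (Ici_mem_nhds ht))
  have hcont : ContinuousWithinAt (fun t => f t • v t) (Set.Ici 0) 0 :=
    ((hf 0).continuousAt.continuousWithinAt).smul
      ((hv 0 Set.self_mem_Ici).continuousWithinAt)
  have key := MeasureTheory.integral_Ioi_of_hasDerivAt_of_tendsto hcont hderiv (h2.add h1) hl
  rw [hv0, smul_zero, zero_sub, neg_zero] at key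
  rw [MeasureTheory.integral_add h2 h1] at key
  rw [eq_neg_iff_add_eq_zero, add_comm]
  exact key

lemma sum_coeff_aux {M : Type*} [AddCommGroup M] [Module ℝ M] (w : ℕ → M) (n : ℕ) :
    ∑ m ∈ Finset.range n, ((n - m + 1 : ℕ) : ℝ) • w m
      = (2 : ℝ) • ∑ m ∈ Finset.range n, w m
        + ∑ m ∈ Finset.range n, ∑ l ∈ Finset.range m, w l := by
  induction n with
  | zero => simp
  | succ n ih =>
    rw [Finset.sum_range_succ, Finset.sum_range_succ,
      Finset.sum_range_succ (f := fun m => ∑ l ∈ Finset.range m, w l)]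
    have h : ∀ m ∈ Finset.range n,
        ((n + 1 - m + 1 : ℕ) : ℝ) • w m = ((n - m + 1 : ℕ) : ℝ) • w m + w m := by
      intro m hm
      have hmn : m ≤ n := (Finset.mem_range.mp hm).le
      rw [Nat.succ_sub hmn]
      push_cast
      rw [add_smul, add_smul]
      simp
    rw [Finset.sum_congr rfl h, Finset.sum_add_distrib, ih]
    have h2 : ((n + 1 - n + 1 : ℕ) : ℝ) = 2 := by
      have : n + 1 - n + 1 = 2 := by omega
      rw [this]; norm_num
    rw [h2]
    simp only [smul_add, two_smul]
    abel

lemma lphi2_sub (κ : ℝ) (n : ℕ) (t : ℝ) :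
    lphi2 κ n t - κ ^ 2 * lphi κ n t
      = κ ^ 2 * (2 * (∑ m ∈ Finset.range n, lphi κ m t)
          + ∑ m ∈ Finset.range n, ∑ l ∈ Finset.range m, lphi κ l t) := by
  have hs : ∑ m ∈ Finset.range n, (-κ * (lphi κ m t + ∑ l ∈ Finset.range m, lphi κ l t))
      = -κ * ((∑ m ∈ Finset.range n, lphi κ m t)
          + ∑ m ∈ Finset.range n, ∑ l ∈ Finset.range m, lphi κ l t) := by
    rw [mul_add, Finset.mul_sum, Finset.mul_sum, ← Finset.sum_add_distrib]
    exact Finset.sum_congr rfl fun m _ => by ring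
  simp only [lphi2, lphi1]
  rw [hs]
  ring

/-- The Fourier–Laguerre coefficients of a causal solution of the elastodynamic equation
∂_t² u = Δ* u satisfy Δ* u_n − κ² u_n = ∑_{m=0}^{n−1} κ²(n−m+1) u_m. -/
theorem lame_laguerre_coefficients (κ cs cp : ℝ) (hκ : 0 < κ) (hcs : 0 < cs) (hcp : 0 < cp)
    (D : Set (Fin 2 → ℝ)) (hD : IsOpen D)
    (u ut utt : (Fin 2 → ℝ) → ℝ → (Fin 2 → ℝ))
    -- (i) regularity in time, with homogeneous initial conditions
    (hut : ∀ x ∈ D, ∀ t ∈ Set.Ici (0 : ℝ),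
      HasDerivWithinAt (fun τ => u x τ) (ut x t) (Set.Ici 0) t)
    (hutt : ∀ x ∈ D, ∀ t ∈ Set.Ici (0 : ℝ),
      HasDerivWithinAt (fun τ => ut x τ) (utt x t) (Set.Ici 0) t)
    (hcontt : ∀ x ∈ D, ContinuousOn (fun τ => utt x τ) (Set.Ici 0))
    (hu0 : ∀ x ∈ D, u x 0 = 0) (hut0 : ∀ x ∈ D, ut x 0 = 0)
    -- (ii) integrability and decay of e^{−κt} t^k ∂_t^j u
    (hint : ∀ x ∈ D, ∀ k : ℕ,
      IntegrableOn (fun t => (Real.exp (-κ * t) * t ^ k) • u x t) (Set.Ioi 0))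
    (hint' : ∀ x ∈ D, ∀ k : ℕ,
      IntegrableOn (fun t => (Real.exp (-κ * t) * t ^ k) • ut x t) (Set.Ioi 0))
    (hint'' : ∀ x ∈ D, ∀ k : ℕ,
      IntegrableOn (fun t => (Real.exp (-κ * t) * t ^ k) • utt x t) (Set.Ioi 0))
    (hlim : ∀ x ∈ D, ∀ k : ℕ,
      Tendsto (fun t => (Real.exp (-κ * t) * t ^ k) • u x t) atTop (nhds 0))
    (hlim' : ∀ x ∈ D, ∀ k : ℕ,
      Tendsto (fun t => (Real.exp (-κ * t) * t ^ k) • ut x t) atTop (nhds 0))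
    -- (iii) spatial regularity and the elastodynamic equation
    (hC2 : ∀ t > (0 : ℝ), ContDiffOn ℝ 2 (fun y => u y t) D)
    (hwave : ∀ x ∈ D, ∀ t > (0 : ℝ), utt x t = lame cs cp (fun y => u y t) x)
    -- (iv) regularity of the coefficients and commutation of Δ* with the transform
    (hC2n : ∀ n : ℕ, ContDiffOn ℝ 2 (lagCoeff κ u n) D)
    (hcomm : ∀ n : ℕ, ∀ x ∈ D,
      lame cs cp (lagCoeff κ u n) x
        = ∫ t in Set.Ioi (0 : ℝ),
            (Real.exp (-κ * t) * lagPoly n (κ * t)) • lame cs cp (fun y => u y t) x) :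
    ∀ n : ℕ, ∀ x ∈ D,
      lame cs cp (lagCoeff κ u n) x - κ ^ 2 • lagCoeff κ u n x
        = ∑ m ∈ Finset.range n, (κ ^ 2 * ((n - m + 1 : ℕ) : ℝ)) • lagCoeff κ u m x := by
  intro n x hx
  have hIu : ∀ m : ℕ, MeasureTheory.IntegrableOn
      (fun t => lphi κ m t • u x t) (Set.Ioi 0) :=
    fun m => lphi_smul_int κ (hint x hx) m
  have hIut : ∀ m : ℕ, MeasureTheory.IntegrableOn
      (fun t => lphi κ m t • ut x t) (Set.Ioi 0) :=
    fun m => lphi_smul_int κ (hint' x hx) m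
  have hIutt : ∀ m : ℕ, MeasureTheory.IntegrableOn
      (fun t => lphi κ m t • utt x t) (Set.Ioi 0) :=
    fun m => lphi_smul_int κ (hint'' x hx) m
  have hI1u : ∀ m : ℕ, MeasureTheory.IntegrableOn
      (fun t => lphi1 κ m t • u x t) (Set.Ioi 0) := by
    intro m; simp only [lphi1]; exact comb_int hIu (-κ) m
  have hI1ut : ∀ m : ℕ, MeasureTheory.IntegrableOn
      (fun t => lphi1 κ m t • ut x t) (Set.Ioi 0) := by
    intro m; simp only [lphi1]; exact comb_int hIut (-κ) m
  have hI2u : ∀ m : ℕ, MeasureTheory.IntegrableOn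
      (fun t => lphi2 κ m t • u x t) (Set.Ioi 0) := by
    intro m; simp only [lphi2]; exact comb_int hI1u (-κ) m
  have hLu : ∀ m : ℕ, Tendsto (fun t => lphi κ m t • u x t) atTop (nhds 0) :=
    fun m => lphi_smul_lim κ (hlim x hx) m
  have hLut : ∀ m : ℕ, Tendsto (fun t => lphi κ m t • ut x t) atTop (nhds 0) :=
    fun m => lphi_smul_lim κ (hlim' x hx) m
  have hL1u : ∀ m : ℕ, Tendsto (fun t => lphi1 κ m t • u x t) atTop (nhds 0) := by
    intro m; simp only [lphi1]; exact comb_lim hLu (-κ) m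
  have e2 : ∫ t in Set.Ioi (0 : ℝ), lphi1 κ n t • ut x t
      = -∫ t in Set.Ioi (0 : ℝ), lphi κ n t • utt x t :=
    ibp_Ioi (hasDerivAt_lphi κ n) (hutt x hx) (hut0 x hx) (hI1ut n) (hIutt n) (hLut n)
  have e3 : ∫ t in Set.Ioi (0 : ℝ), lphi2 κ n t • u x t
      = -∫ t in Set.Ioi (0 : ℝ), lphi1 κ n t • ut x t :=
    ibp_Ioi (hasDerivAt_lphi1 κ n) (hut x hx) (hu0 x hx) (hI2u n) (hI1ut n) (hL1u n)
  have e23 : ∫ t in Set.Ioi (0 : ℝ), lphi2 κ n t • u x t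
      = ∫ t in Set.Ioi (0 : ℝ), lphi κ n t • utt x t := by
    rw [e3, e2, neg_neg]
  have e4 : lame cs cp (lagCoeff κ u n) x = ∫ t in Set.Ioi (0 : ℝ), lphi κ n t • utt x t := by
    rw [hcomm n x hx]
    refine MeasureTheory.setIntegral_congr_fun measurableSet_Ioi fun t ht => ?_
    simp only [lphi]
    rw [hwave x hx t (Set.mem_Ioi.mp ht)]
  have hmulfun : (fun t => (κ ^ 2 * lphi κ n t) • u x t)
      = fun t => (κ ^ 2 : ℝ) • (lphi κ n t • u x t) := by
    funext t; rw [mul_smul]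
  have e5 : κ ^ 2 • lagCoeff κ u n x
      = ∫ t in Set.Ioi (0 : ℝ), (κ ^ 2 * lphi κ n t) • u x t := by
    rw [hmulfun, MeasureTheory.integral_smul]
    rfl
  have hIκ2 : MeasureTheory.IntegrableOn
      (fun t => (κ ^ 2 * lphi κ n t) • u x t) (Set.Ioi 0) := by
    rw [hmulfun]; exact (hIu n).smul (κ ^ 2)
  have A : ∫ t in Set.Ioi (0 : ℝ), ∑ m ∈ Finset.range n, lphi κ m t • u x t
      = ∑ m ∈ Finset.range n, lagCoeff κ u m x := by
    rw [MeasureTheory.integral_finset_sum _ fun m _ => hIu m]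
    exact Finset.sum_congr rfl fun m _ => rfl
  have B : ∫ t in Set.Ioi (0 : ℝ),
        ∑ m ∈ Finset.range n, ∑ l ∈ Finset.range m, lphi κ l t • u x t
      = ∑ m ∈ Finset.range n, ∑ l ∈ Finset.range m, lagCoeff κ u l x := by
    rw [MeasureTheory.integral_finset_sum _ fun m _ =>
      MeasureTheory.integrable_finset_sum _ fun l _ => hIu l]
    refine Finset.sum_congr rfl fun m _ => ?_
    rw [MeasureTheory.integral_finset_sum _ fun l _ => hIu l]
    exact Finset.sum_congr rfl fun l _ => rfl
  have hIA : MeasureTheory.IntegrableOn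
      (fun t => (2 : ℝ) • ∑ m ∈ Finset.range n, lphi κ m t • u x t) (Set.Ioi 0) :=
    (MeasureTheory.integrable_finset_sum _ fun m _ => hIu m).smul (2 : ℝ)
  have hIB : MeasureTheory.IntegrableOn
      (fun t => ∑ m ∈ Finset.range n, ∑ l ∈ Finset.range m, lphi κ l t • u x t) (Set.Ioi 0) :=
    MeasureTheory.integrable_finset_sum _ fun m _ =>
      MeasureTheory.integrable_finset_sum _ fun l _ => hIu l
  have hfun2 : (fun t => lphi2 κ n t • u x t - (κ ^ 2 * lphi κ n t) • u x t)
      = fun t => (κ ^ 2 : ℝ) • ((2 : ℝ) • (∑ m ∈ Finset.range n, lphi κ m t • u x t)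
          + ∑ m ∈ Finset.range n, ∑ l ∈ Finset.range m, lphi κ l t • u x t) := by
    funext t
    rw [← sub_smul, lphi2_sub]
    simp only [mul_smul, add_smul, Finset.sum_smul]
  rw [e4, e5, ← e23, ← MeasureTheory.integral_sub (hI2u n) hIκ2, hfun2,
    MeasureTheory.integral_smul, MeasureTheory.integral_add hIA hIB,
    MeasureTheory.integral_smul, A, B,
    ← sum_coeff_aux (fun m => lagCoeff κ u m x) n, Finset.smul_sum]
  exact Finset.sum_congr rfl fun m _ => (mul_smul _ _ _).symm
end

section
/- Let κ > 0 and let u : [0,∞) → ℝ be continuously differentiable such that for every k ∈ ℕ the functions t ↦ e^{−κt} t^k u(t) and t ↦ e^{−κt} t^k u'(t) are integrable on (0,∞) and e^{−κt} t^k u(t) → 0 as t → ∞. Then for every n ∈ ℕ, ∫_0^∞ e^{−κt} L_n(κt) u'(t) dt = κ ∑_{m=0}^{n} u_m − u(0), where u_m = ∫_0^∞ e^{−κt} L_m(κt) u(t) dt. -/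
open Real Filter MeasureTheory


noncomputable def dLag (n : ℕ) (x : ℝ) : ℝ :=
  ∑ k ∈ Finset.range n, (-1 : ℝ) ^ (k+1) * (n.choose (k+1) : ℝ) * x ^ k / (k.factorial : ℝ)

lemma lagPoly_hasDerivAt (n : ℕ) (x : ℝ) : HasDerivAt (lagPoly n) (dLag n x) x := by
  have h : HasDerivAt (fun y => ∑ k ∈ Finset.range (n+1),
      (-1 : ℝ) ^ k * (n.choose k : ℝ) * y ^ k / (k.factorial : ℝ))
      (∑ k ∈ Finset.range (n+1),
        (-1 : ℝ) ^ k * (n.choose k : ℝ) * (↑k * x ^ (k-1)) / (k.factorial : ℝ)) x := by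
    apply HasDerivAt.fun_sum
    intro k _
    have h1 := (hasDerivAt_pow k x).const_mul ((-1 : ℝ) ^ k * (n.choose k : ℝ) / (k.factorial : ℝ))
    simp only [div_mul_eq_mul_div] at h1
    exact h1
  have heq : (∑ k ∈ Finset.range (n+1),
        (-1 : ℝ) ^ k * (n.choose k : ℝ) * (↑k * x ^ (k-1)) / (k.factorial : ℝ)) = dLag n x := by
    rw [Finset.sum_range_succ']
    simp only [Nat.cast_zero, zero_mul, mul_zero, zero_div, add_zero]
    unfold dLag
    apply Finset.sum_congr rfl
    intro k _
    have hf : ((k+1).factorial : ℝ) = ((k:ℝ)+1) * (k.factorial : ℝ) := by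
      rw [Nat.factorial_succ]; push_cast; ring
    rw [hf]
    have hk0 : (k.factorial : ℝ) ≠ 0 := Nat.cast_ne_zero.mpr k.factorial_ne_zero
    have hk1 : ((k:ℝ)+1) ≠ 0 := by positivity
    simp only [Nat.add_sub_cancel]
    push_cast
    field_simp
  rw [heq] at h
  exact h

lemma dLag_succ (n : ℕ) (x : ℝ) : dLag (n+1) x = dLag n x - lagPoly n x := by
  have h1 : dLag n x = ∑ k ∈ Finset.range (n+1),
      (-1 : ℝ) ^ (k+1) * (n.choose (k+1) : ℝ) * x ^ k / (k.factorial : ℝ) := by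
    unfold dLag; rw [Finset.sum_range_succ, Nat.choose_succ_self]; simp
  rw [h1]
  unfold dLag lagPoly
  rw [← Finset.sum_sub_distrib]
  apply Finset.sum_congr rfl
  intro k _
  rw [Nat.choose_succ_succ]
  push_cast
  ring

lemma sum_lagPoly (n : ℕ) (x : ℝ) :
    ∑ m ∈ Finset.range (n+1), lagPoly m x = lagPoly n x - dLag n x := by
  induction n with
  | zero => simp [lagPoly, dLag]
  | succ n ih => rw [Finset.sum_range_succ, ih, dLag_succ]; ring

lemma lagPoly_zero (n : ℕ) : lagPoly n 0 = 1 := by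
  unfold lagPoly
  rw [Finset.sum_eq_single 0]
  · simp
  · intro k _ hk; simp [zero_pow hk]
  · simp


lemma lag_expand (κ : ℝ) (m : ℕ) (v : ℝ → ℝ) :
    (fun t => Real.exp (-κ * t) * lagPoly m (κ * t) * v t)
      = fun t => ∑ k ∈ Finset.range (m+1),
          ((-1 : ℝ) ^ k * (m.choose k : ℝ) * κ ^ k / (k.factorial : ℝ))
            * (Real.exp (-κ * t) * t ^ k * v t) := by
  funext t
  unfold lagPoly
  rw [Finset.mul_sum, Finset.sum_mul]
  apply Finset.sum_congr rfl
  intro k _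
  rw [mul_pow]
  ring

lemma lag_intOn (κ : ℝ) (m : ℕ) (v : ℝ → ℝ)
    (hv : ∀ k : ℕ, IntegrableOn (fun t => Real.exp (-κ * t) * t ^ k * v t) (Set.Ioi 0)) :
    IntegrableOn (fun t => Real.exp (-κ * t) * lagPoly m (κ * t) * v t) (Set.Ioi 0) := by
  rw [lag_expand]
  exact integrable_finset_sum _ fun k _ => (hv k).const_mul _

lemma lag_tendsto (κ : ℝ) (m : ℕ) (v : ℝ → ℝ)
    (hv : ∀ k : ℕ, Tendsto (fun t => Real.exp (-κ * t) * t ^ k * v t) atTop (nhds 0)) :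
    Tendsto (fun t => Real.exp (-κ * t) * lagPoly m (κ * t) * v t) atTop (nhds 0) := by
  rw [lag_expand]
  have := tendsto_finset_sum (Finset.range (m+1))
    (fun k _ => ((hv k).const_mul (((-1 : ℝ) ^ k * (m.choose k : ℝ) * κ ^ k / (k.factorial : ℝ)))))
  simpa using this

/-- Laguerre transform of the first derivative:
∫₀^∞ e^{−κt} L_n(κt) u'(t) dt = κ ∑_{m=0}^n u_m − u(0). -/
theorem laguerre_transform_deriv (κ : ℝ) (hκ : 0 < κ) (u u' : ℝ → ℝ)
    (hderiv : ∀ t ∈ Set.Ici (0 : ℝ), HasDerivWithinAt u (u' t) (Set.Ici 0) t)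
    (hcont : ContinuousOn u' (Set.Ici 0))
    (hint : ∀ k : ℕ, IntegrableOn (fun t => Real.exp (-κ * t) * t ^ k * u t) (Set.Ioi 0))
    (hint' : ∀ k : ℕ, IntegrableOn (fun t => Real.exp (-κ * t) * t ^ k * u' t) (Set.Ioi 0))
    (hlim : ∀ k : ℕ, Tendsto (fun t => Real.exp (-κ * t) * t ^ k * u t) atTop (nhds 0))
    (n : ℕ) :
    (∫ t in Set.Ioi (0 : ℝ), Real.exp (-κ * t) * lagPoly n (κ * t) * u' t)
      = κ * (∑ m ∈ Finset.range (n + 1),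
          ∫ t in Set.Ioi (0 : ℝ), Real.exp (-κ * t) * lagPoly m (κ * t) * u t) - u 0 := by
  set G : ℝ → ℝ := fun t => Real.exp (-κ * t) * lagPoly n (κ * t) * u t with hG
  set A : ℝ → ℝ := fun t => Real.exp (-κ * t) * lagPoly n (κ * t) * u' t with hA
  set B : ℝ → ℝ := fun t =>
    ∑ m ∈ Finset.range (n + 1), Real.exp (-κ * t) * lagPoly m (κ * t) * u t with hBdef
  set F' : ℝ → ℝ := fun t => A t - κ * B t with hF'
  -- B rewritten
  have hB : ∀ t : ℝ, B t = Real.exp (-κ * t) * (lagPoly n (κ * t) - dLag n (κ * t)) * u t := by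
    intro t
    rw [hBdef]
    simp only
    rw [← Finset.sum_mul, ← Finset.mul_sum, sum_lagPoly]
  -- derivative of G on Ioi 0
  have hGderiv : ∀ t ∈ Set.Ioi (0 : ℝ), HasDerivAt G (F' t) t := by
    intro t ht
    have ht' : (0 : ℝ) < t := ht
    have hu : HasDerivAt u (u' t) t :=
      (hderiv t (le_of_lt ht')).hasDerivAt (Ici_mem_nhds ht')
    have he : HasDerivAt (fun s => Real.exp (-κ * s)) (Real.exp (-κ * t) * (-κ * 1)) t :=
      ((hasDerivAt_id t).const_mul (-κ)).exp
    have hlin : HasDerivAt (fun s : ℝ => κ * s) (κ * 1) t := (hasDerivAt_id t).const_mul κ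
    have hl : HasDerivAt (fun s => lagPoly n (κ * s)) (dLag n (κ * t) * (κ * 1)) t := by
      have := (lagPoly_hasDerivAt n (κ * t)).comp t hlin
      exact this
    have htot : HasDerivAt G _ t := (he.mul hl).mul hu
    convert htot using 1
    rw [hF']
    simp only
    rw [hA]
    simp only
    rw [hB t]
    simp only [Pi.mul_apply]
    ring
  -- continuity of G at 0 within Ici 0
  have hcontG : ContinuousWithinAt G (Set.Ici 0) 0 := by
    have h1 : ContinuousWithinAt u (Set.Ici 0) 0 :=
      (hderiv 0 (Set.self_mem_Ici)).continuousWithinAt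
    have h2 : Continuous (fun t : ℝ => Real.exp (-κ * t) * lagPoly n (κ * t)) := by
      unfold lagPoly
      fun_prop
    exact (h2.continuousWithinAt).mul h1
  -- integrability
  have hAint : IntegrableOn A (Set.Ioi 0) := lag_intOn κ n u' hint'
  have hBint : IntegrableOn B (Set.Ioi 0) :=
    integrable_finset_sum _ fun m _ => lag_intOn κ m u hint
  have hF'int : IntegrableOn F' (Set.Ioi 0) := hAint.sub (hBint.const_mul κ)
  -- limit of G at infinity
  have hGlim : Tendsto G atTop (nhds 0) := lag_tendsto κ n u hlim
  -- integration by parts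
  have key : ∫ t in Set.Ioi (0 : ℝ), F' t = 0 - G 0 :=
    integral_Ioi_of_hasDerivAt_of_tendsto hcontG hGderiv hF'int hGlim
  have hG0 : G 0 = u 0 := by
    rw [hG]; simp [lagPoly_zero]
  have hsplit : ∫ t in Set.Ioi (0 : ℝ), F' t
      = (∫ t in Set.Ioi (0 : ℝ), A t) - κ * ∫ t in Set.Ioi (0 : ℝ), B t := by
    rw [hF']
    rw [integral_sub hAint (hBint.const_mul κ), MeasureTheory.integral_const_mul]
  have hBsum : ∫ t in Set.Ioi (0 : ℝ), B t
      = ∑ m ∈ Finset.range (n + 1),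
          ∫ t in Set.Ioi (0 : ℝ), Real.exp (-κ * t) * lagPoly m (κ * t) * u t := by
    rw [hBdef]
    exact integral_finset_sum _ fun m _ => lag_intOn κ m u hint
  rw [hsplit, hBsum, hG0] at key
  linarith
end

section
/- Let κ > 0 and let u : [0,∞) → ℝ be twice continuously differentiable with u(0) = 0 and u'(0) = 0, such that for every k ∈ ℕ the functions t ↦ e^{−κt} t^k u(t), t ↦ e^{−κt} t^k u'(t) and t ↦ e^{−κt} t^k u''(t) are integrable on (0,∞) and e^{−κt} t^k u(t) → 0 and e^{−κt} t^k u'(t) → 0 as t → ∞. Then for every n ∈ ℕ, ∫_0^∞ e^{−κt} L_n(κt) u''(t) dt = κ² ∑_{m=0}^{n} (n−m+1) u_m, where u_m = ∫_0^∞ e^{−κt} L_m(κt) u(t) dt. Equivalently, ∫_0^∞ e^{−κt} L_n(κt) u''(t) dt = κ² u_n + ∑_{m=0}^{n−1} κ²(n−m+1) u_m. -/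
open Real Filter MeasureTheory


lemma sumLag (n : ℕ) (x : ℝ) :
    ∑ m ∈ Finset.range n, lagPoly m x
      = ∑ j ∈ Finset.range n, (n.choose (j+1) : ℝ) * ((-1:ℝ)^j * x^j / (j.factorial : ℝ)) := by
  induction n with
  | zero => simp
  | succ n ih =>
    rw [Finset.sum_range_succ, ih]
    have hlag : lagPoly n x
        = ∑ j ∈ Finset.range (n+1), (n.choose j : ℝ) * ((-1:ℝ)^j * x^j / (j.factorial : ℝ)) := by
      unfold lagPoly; exact Finset.sum_congr rfl fun j _ => by ring
    have h2 : ∑ j ∈ Finset.range n, (n.choose (j+1) : ℝ) * ((-1:ℝ)^j * x^j / (j.factorial : ℝ))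
        = ∑ j ∈ Finset.range (n+1), (n.choose (j+1) : ℝ) * ((-1:ℝ)^j * x^j / (j.factorial : ℝ)) := by
      rw [Finset.sum_range_succ, Nat.choose_succ_self]; simp
    rw [hlag, h2, ← Finset.sum_add_distrib]
    refine Finset.sum_congr rfl fun j _ => ?_
    rw [Nat.choose_succ_succ]
    push_cast; ring

lemma hasDerivAt_lagPoly_s2 (n : ℕ) (x : ℝ) :
    HasDerivAt (lagPoly n) (-(∑ m ∈ Finset.range n, lagPoly m x)) x := by
  have h1 : HasDerivAt (lagPoly n)
      (∑ k ∈ Finset.range (n+1),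
        (-1:ℝ)^k * (n.choose k : ℝ) * ((k:ℝ) * x^(k-1)) / (k.factorial : ℝ)) x := by
    have : ∀ k ∈ Finset.range (n+1), HasDerivAt (fun y : ℝ =>
        (-1:ℝ)^k * (n.choose k : ℝ) * y ^ k / (k.factorial : ℝ))
        ((-1:ℝ)^k * (n.choose k : ℝ) * ((k:ℝ) * x^(k-1)) / (k.factorial : ℝ)) x := by
      intro k _
      exact (((hasDerivAt_pow k x).const_mul ((-1:ℝ)^k * (n.choose k : ℝ))).div_const _)
    exact HasDerivAt.fun_sum this
  convert h1 using 1
  rw [sumLag, ← Finset.sum_neg_distrib]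
  rw [Finset.sum_range_succ']
  simp only [Nat.add_sub_cancel]
  have hz : (-1:ℝ)^0 * (n.choose 0 : ℝ) * ((0:ℕ):ℝ) * x^(0-1) / ((Nat.factorial 0 : ℕ):ℝ) = 0 := by
    simp
  rw [show ((-1:ℝ)^0 * (n.choose 0 : ℝ) * (((0:ℕ):ℝ) * x^(0-1)) / ((Nat.factorial 0:ℕ):ℝ)) = 0 by simp]
  rw [add_zero]
  refine Finset.sum_congr rfl fun j _ => ?_
  rw [Nat.factorial_succ]
  have hj : ((j.factorial : ℕ):ℝ) ≠ 0 := Nat.cast_ne_zero.mpr j.factorial_ne_zero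
  push_cast
  field_simp
  ring

lemma sum_nested (n : ℕ) (a : ℕ → ℝ) :
    ∑ m ∈ Finset.range (n+1), ∑ j ∈ Finset.range (m+1), a j
      = ∑ j ∈ Finset.range (n+1), ((n - j + 1 : ℕ) : ℝ) * a j := by
  induction n with
  | zero => simp
  | succ n ih =>
    rw [Finset.sum_range_succ (n := n+1), ih]
    rw [Finset.sum_range_succ (f := fun j => ((n+1 - j + 1 : ℕ) : ℝ) * a j)]
    rw [Finset.sum_range_succ (f := fun j => a j)]
    have h : ∀ j ∈ Finset.range (n+1),
        ((n+1 - j + 1 : ℕ) : ℝ) * a j = ((n - j + 1 : ℕ) : ℝ) * a j + a j := by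
      intro j hj
      rw [Finset.mem_range] at hj
      rw [show (n+1 - j + 1 : ℕ) = (n - j + 1) + 1 by omega]
      push_cast; ring
    rw [Finset.sum_congr rfl h, Finset.sum_add_distrib]
    simp only [Nat.add_sub_cancel_left, Nat.sub_self]
    push_cast
    ring

noncomputable def lagExp (κ : ℝ) (n : ℕ) (t : ℝ) : ℝ := Real.exp (-κ * t) * lagPoly n (κ * t)
noncomputable def lagExpD (κ : ℝ) (n : ℕ) (t : ℝ) : ℝ :=
  -κ * ∑ m ∈ Finset.range (n+1), lagExp κ m t
noncomputable def lagExpDD (κ : ℝ) (n : ℕ) (t : ℝ) : ℝ :=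
  κ^2 * ∑ m ∈ Finset.range (n+1), ((n - m + 1 : ℕ) : ℝ) * lagExp κ m t

lemma continuous_lagPoly (n : ℕ) : Continuous (lagPoly n) := by
  unfold lagPoly
  exact continuous_finset_sum _ fun k _ => (continuous_const.mul (continuous_pow k)).div_const _

lemma continuous_lagExp (κ : ℝ) (n : ℕ) : Continuous (lagExp κ n) := by
  unfold lagExp
  exact (Real.continuous_exp.comp (continuous_const.mul continuous_id)).mul
    ((continuous_lagPoly n).comp (continuous_const.mul continuous_id))

lemma continuous_lagExpD (κ : ℝ) (n : ℕ) : Continuous (lagExpD κ n) := by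
  unfold lagExpD
  exact continuous_const.mul (continuous_finset_sum _ fun m _ => continuous_lagExp κ m)

lemma hasDerivAt_lagExp (κ : ℝ) (n : ℕ) (t : ℝ) :
    HasDerivAt (lagExp κ n) (lagExpD κ n t) t := by
  have hmul : HasDerivAt (fun y : ℝ => -κ * y) (-κ) t := by
    simpa using (hasDerivAt_id t).const_mul (-κ)
  have hmul2 : HasDerivAt (fun y : ℝ => κ * y) κ t := by
    simpa using (hasDerivAt_id t).const_mul κ
  have hexp : HasDerivAt (fun t : ℝ => Real.exp (-κ * t)) (Real.exp (-κ * t) * (-κ)) t := by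
    simpa using hmul.exp
  have hlag : HasDerivAt (fun y : ℝ => lagPoly n (κ * y))
      ((-(∑ m ∈ Finset.range n, lagPoly m (κ * t))) * κ) t :=
    (hasDerivAt_lagPoly_s2 n (κ * t)).comp t hmul2
  have hprod := hexp.mul hlag
  refine hprod.congr_deriv ?_
  unfold lagExpD lagExp
  rw [Finset.sum_range_succ, ← Finset.mul_sum]
  ring

lemma hasDerivAt_lagExpD (κ : ℝ) (n : ℕ) (t : ℝ) :
    HasDerivAt (lagExpD κ n) (lagExpDD κ n t) t := by
  have h : HasDerivAt (fun t => ∑ m ∈ Finset.range (n+1), lagExp κ m t)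
      (∑ m ∈ Finset.range (n+1), lagExpD κ m t) t :=
    HasDerivAt.fun_sum fun m _ => hasDerivAt_lagExp κ m t
  have h2 := h.const_mul (-κ)
  refine h2.congr_deriv ?_
  unfold lagExpDD lagExpD
  rw [← sum_nested n (fun j => lagExp κ j t), Finset.mul_sum, Finset.mul_sum]
  exact Finset.sum_congr rfl fun m _ => by ring

lemma lagExp_mul_eq (κ : ℝ) (f : ℝ → ℝ) (m : ℕ) :
    (fun t => lagExp κ m t * f t) = fun t =>
      ∑ k ∈ Finset.range (m+1), ((-1:ℝ)^k * (m.choose k : ℝ) * κ^k / (k.factorial : ℝ)) *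
        (Real.exp (-κ * t) * t ^ k * f t) := by
  funext t
  unfold lagExp lagPoly
  rw [Finset.mul_sum, Finset.sum_mul]
  refine Finset.sum_congr rfl fun k _ => ?_
  rw [mul_pow]
  ring

lemma lagExp_mul_integrable (κ : ℝ) (f : ℝ → ℝ)
    (hf : ∀ k : ℕ, IntegrableOn (fun t => Real.exp (-κ * t) * t ^ k * f t) (Set.Ioi 0)) (m : ℕ) :
    IntegrableOn (fun t => lagExp κ m t * f t) (Set.Ioi 0) := by
  rw [lagExp_mul_eq]
  exact integrable_finset_sum _ fun k _ => (hf k).const_mul _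

lemma lagExp_mul_tendsto (κ : ℝ) (f : ℝ → ℝ)
    (hf : ∀ k : ℕ, Tendsto (fun t => Real.exp (-κ * t) * t ^ k * f t) atTop (nhds 0)) (m : ℕ) :
    Tendsto (fun t => lagExp κ m t * f t) atTop (nhds 0) := by
  rw [lagExp_mul_eq]
  have := tendsto_finset_sum (Finset.range (m+1))
    (fun k _ => ((hf k).const_mul (((-1:ℝ)^k * (m.choose k : ℝ) * κ^k / (k.factorial : ℝ)))))
  simpa using this

lemma lagExpD_mul_eq (κ : ℝ) (f : ℝ → ℝ) (n : ℕ) :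
    (fun t => lagExpD κ n t * f t) = fun t =>
      ∑ m ∈ Finset.range (n+1), (-κ) * (lagExp κ m t * f t) := by
  funext t
  unfold lagExpD
  rw [Finset.mul_sum, Finset.sum_mul]
  exact Finset.sum_congr rfl fun m _ => by ring

lemma lagExpD_mul_integrable (κ : ℝ) (f : ℝ → ℝ)
    (hf : ∀ k : ℕ, IntegrableOn (fun t => Real.exp (-κ * t) * t ^ k * f t) (Set.Ioi 0)) (n : ℕ) :
    IntegrableOn (fun t => lagExpD κ n t * f t) (Set.Ioi 0) := by
  rw [lagExpD_mul_eq]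
  exact integrable_finset_sum _ fun m _ => ((lagExp_mul_integrable κ f hf m).const_mul _)

lemma lagExpD_mul_tendsto (κ : ℝ) (f : ℝ → ℝ)
    (hf : ∀ k : ℕ, Tendsto (fun t => Real.exp (-κ * t) * t ^ k * f t) atTop (nhds 0)) (n : ℕ) :
    Tendsto (fun t => lagExpD κ n t * f t) atTop (nhds 0) := by
  rw [lagExpD_mul_eq]
  have := tendsto_finset_sum (Finset.range (n+1))
    (fun m _ => ((lagExp_mul_tendsto κ f hf m).const_mul (-κ)))
  simpa using this

lemma lagExpDD_mul_eq (κ : ℝ) (f : ℝ → ℝ) (n : ℕ) :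
    (fun t => lagExpDD κ n t * f t) = fun t =>
      ∑ m ∈ Finset.range (n+1), (κ^2 * ((n - m + 1 : ℕ) : ℝ)) * (lagExp κ m t * f t) := by
  funext t
  unfold lagExpDD
  rw [Finset.mul_sum, Finset.sum_mul]
  exact Finset.sum_congr rfl fun m _ => by ring

lemma lagExpDD_mul_integrable (κ : ℝ) (f : ℝ → ℝ)
    (hf : ∀ k : ℕ, IntegrableOn (fun t => Real.exp (-κ * t) * t ^ k * f t) (Set.Ioi 0)) (n : ℕ) :
    IntegrableOn (fun t => lagExpDD κ n t * f t) (Set.Ioi 0) := by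
  rw [lagExpDD_mul_eq]
  exact integrable_finset_sum _ fun m _ => ((lagExp_mul_integrable κ f hf m).const_mul _)
/-- Laguerre transform of the second derivative (with u(0) = u'(0) = 0):
∫₀^∞ e^{−κt} L_n(κt) u''(t) dt = κ² ∑_{m=0}^n (n−m+1) u_m
                               = κ² u_n + ∑_{m=0}^{n−1} κ²(n−m+1) u_m. -/

theorem laguerre_transform_second_deriv (κ : ℝ) (hκ : 0 < κ) (u u' u'' : ℝ → ℝ)
    (hderiv : ∀ t ∈ Set.Ici (0 : ℝ), HasDerivWithinAt u (u' t) (Set.Ici 0) t)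
    (hderiv' : ∀ t ∈ Set.Ici (0 : ℝ), HasDerivWithinAt u' (u'' t) (Set.Ici 0) t)
    (hcont : ContinuousOn u'' (Set.Ici 0))
    (hu0 : u 0 = 0) (hu'0 : u' 0 = 0)
    (hint : ∀ k : ℕ, IntegrableOn (fun t => Real.exp (-κ * t) * t ^ k * u t) (Set.Ioi 0))
    (hint' : ∀ k : ℕ, IntegrableOn (fun t => Real.exp (-κ * t) * t ^ k * u' t) (Set.Ioi 0))
    (hint'' : ∀ k : ℕ, IntegrableOn (fun t => Real.exp (-κ * t) * t ^ k * u'' t) (Set.Ioi 0))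
    (hlim : ∀ k : ℕ, Tendsto (fun t => Real.exp (-κ * t) * t ^ k * u t) atTop (nhds 0))
    (hlim' : ∀ k : ℕ, Tendsto (fun t => Real.exp (-κ * t) * t ^ k * u' t) atTop (nhds 0))
    (n : ℕ) :
    (∫ t in Set.Ioi (0 : ℝ), Real.exp (-κ * t) * lagPoly n (κ * t) * u'' t)
      = κ ^ 2 * (∑ m ∈ Finset.range (n + 1), ((n - m + 1 : ℕ) : ℝ) *
          ∫ t in Set.Ioi (0 : ℝ), Real.exp (-κ * t) * lagPoly m (κ * t) * u t) ∧
    (∫ t in Set.Ioi (0 : ℝ), Real.exp (-κ * t) * lagPoly n (κ * t) * u'' t)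
      = κ ^ 2 * (∫ t in Set.Ioi (0 : ℝ), Real.exp (-κ * t) * lagPoly n (κ * t) * u t)
        + ∑ m ∈ Finset.range n, κ ^ 2 * ((n - m + 1 : ℕ) : ℝ) *
            ∫ t in Set.Ioi (0 : ℝ), Real.exp (-κ * t) * lagPoly m (κ * t) * u t := by
  -- derivatives on Ioi 0
  have hU1 : ∀ x ∈ Set.Ioi (0:ℝ), HasDerivAt (lagExp κ n) (lagExpD κ n x) x :=
    fun x _ => hasDerivAt_lagExp κ n x
  have hU2 : ∀ x ∈ Set.Ioi (0:ℝ), HasDerivAt (lagExpD κ n) (lagExpDD κ n x) x :=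
    fun x _ => hasDerivAt_lagExpD κ n x
  have hVu : ∀ x ∈ Set.Ioi (0:ℝ), HasDerivAt u (u' x) x := fun x hx =>
    (hderiv x (Set.mem_Ici.mpr (le_of_lt hx))).hasDerivAt (Ici_mem_nhds hx)
  have hVu' : ∀ x ∈ Set.Ioi (0:ℝ), HasDerivAt u' (u'' x) x := fun x hx =>
    (hderiv' x (Set.mem_Ici.mpr (le_of_lt hx))).hasDerivAt (Ici_mem_nhds hx)
  -- boundary limits at 0
  have hzero1 : Tendsto (lagExp κ n * u') (nhdsWithin 0 (Set.Ioi 0)) (nhds 0) := by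
    have h1 : Tendsto u' (nhdsWithin 0 (Set.Ioi 0)) (nhds 0) := by
      have hc := (hderiv' 0 Set.self_mem_Ici).continuousWithinAt
      have := hc.mono (Set.Ioi_subset_Ici le_rfl)
      unfold ContinuousWithinAt at this
      rwa [hu'0] at this
    have h2 : Tendsto (lagExp κ n) (nhdsWithin 0 (Set.Ioi 0)) (nhds (lagExp κ n 0)) :=
      ((continuous_lagExp κ n).tendsto 0).mono_left nhdsWithin_le_nhds
    have := h2.mul h1
    rwa [mul_zero] at this
  have hzero2 : Tendsto (lagExpD κ n * u) (nhdsWithin 0 (Set.Ioi 0)) (nhds 0) := by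
    have h1 : Tendsto u (nhdsWithin 0 (Set.Ioi 0)) (nhds 0) := by
      have hc := (hderiv 0 Set.self_mem_Ici).continuousWithinAt
      have := hc.mono (Set.Ioi_subset_Ici le_rfl)
      unfold ContinuousWithinAt at this
      rwa [hu0] at this
    have h2 : Tendsto (lagExpD κ n) (nhdsWithin 0 (Set.Ioi 0)) (nhds (lagExpD κ n 0)) :=
      ((continuous_lagExpD κ n).tendsto 0).mono_left nhdsWithin_le_nhds
    have := h2.mul h1
    rwa [mul_zero] at this
  -- limits at infinity
  have htop1 : Tendsto (lagExp κ n * u') atTop (nhds 0) := lagExp_mul_tendsto κ u' hlim' n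
  have htop2 : Tendsto (lagExpD κ n * u) atTop (nhds 0) := lagExpD_mul_tendsto κ u hlim n
  -- integrability
  have hi1 : IntegrableOn (lagExp κ n * u'') (Set.Ioi 0) := lagExp_mul_integrable κ u'' hint'' n
  have hi2 : IntegrableOn (lagExpD κ n * u') (Set.Ioi 0) := lagExpD_mul_integrable κ u' hint' n
  have hi3 : IntegrableOn (lagExpD κ n * u') (Set.Ioi 0) := hi2
  have hi4 : IntegrableOn (lagExpDD κ n * u) (Set.Ioi 0) := lagExpDD_mul_integrable κ u hint n
  -- first integration by parts
  have IBP1 := integral_Ioi_mul_deriv_eq_deriv_mul hU1 hVu' hi1 hi2 hzero1 htop1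
  have IBP2 := integral_Ioi_mul_deriv_eq_deriv_mul hU2 hVu hi3 hi4 hzero2 htop2
  have key0 : (∫ t in Set.Ioi (0:ℝ), lagExp κ n t * u'' t)
      = ∫ t in Set.Ioi (0:ℝ), lagExpDD κ n t * u t := by
    rw [IBP1, IBP2]; ring
  have key : (∫ t in Set.Ioi (0 : ℝ), Real.exp (-κ * t) * lagPoly n (κ * t) * u'' t)
      = κ ^ 2 * (∑ m ∈ Finset.range (n + 1), ((n - m + 1 : ℕ) : ℝ) *
          ∫ t in Set.Ioi (0 : ℝ), Real.exp (-κ * t) * lagPoly m (κ * t) * u t) := by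
    have e1 : (∫ t in Set.Ioi (0 : ℝ), Real.exp (-κ * t) * lagPoly n (κ * t) * u'' t)
        = ∫ t in Set.Ioi (0:ℝ), lagExp κ n t * u'' t := rfl
    rw [e1, key0]
    have e2 : (fun t => lagExpDD κ n t * u t) = fun t =>
        ∑ m ∈ Finset.range (n+1), (κ^2 * ((n - m + 1 : ℕ) : ℝ)) * (lagExp κ m t * u t) :=
      lagExpDD_mul_eq κ u n
    rw [show (∫ t in Set.Ioi (0:ℝ), lagExpDD κ n t * u t)
        = ∫ t in Set.Ioi (0:ℝ), ∑ m ∈ Finset.range (n+1),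
            (κ^2 * ((n - m + 1 : ℕ) : ℝ)) * (lagExp κ m t * u t) from by rw [← e2]]
    rw [MeasureTheory.integral_finset_sum _
      (fun m _ => ((lagExp_mul_integrable κ u hint m).const_mul _))]
    rw [Finset.mul_sum]
    refine Finset.sum_congr rfl fun m _ => ?_
    rw [integral_const_mul,
      show (∫ (a:ℝ) in Set.Ioi 0, lagExp κ m a * u a)
        = ∫ t in Set.Ioi (0:ℝ), Real.exp (-κ*t) * lagPoly m (κ*t) * u t from rfl]
    ring
  refine ⟨key, ?_⟩
  rw [key, Finset.sum_range_succ, Nat.sub_self, mul_add, add_comm]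
  congr 1
  · norm_num
  · rw [Finset.mul_sum]
    exact Finset.sum_congr rfl fun m _ => by ring
end

section
/- Let κ, c_s, c_p > 0 and n ∈ ℕ. Then there exist ε > 0 and M > 0 such that for all 0 < r < ε, |η_{1,n}(r) − (−1/(2c_p²) − 1/(2c_s²))| ≤ M r²; in particular η_{1,n}(r) → −1/(2c_p²) − 1/(2c_s²) as r → 0⁺. -/
open Real Filter MeasureTheory

noncomputable def acoef (γ : ℝ) : ℕ → ℕ → ℝ
  | n, m =>
    if m = 0 then 1
    else if n < m then 0
    else if m = n then -(γ / (n : ℝ)) * acoef γ (n - 1) (n - 1)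
    else (1 / (2 * γ * (m : ℝ))) *
      (4 * (((m + 1) / 2 : ℕ) : ℝ) ^ 2 * acoef γ n (m + 1)
        - γ ^ 2 * ∑ k ∈ (Finset.Icc (m - 1) (n - 1)).attach,
            ((n - (k : ℕ) + 1 : ℕ) : ℝ) * acoef γ (k : ℕ) (m - 1))
  termination_by n m => (n, n - m)
  decreasing_by
  · apply Prod.Lex.left; omega
  · apply Prod.Lex.right; omega
  · apply Prod.Lex.left
    have hk := k.2
    simp only [Finset.mem_Icc] at hk
    omega

/-- χ_{k,n} -/
noncomputable def chiC (n : ℕ) (k : ℤ) : ℝ :=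
  if k = -2 then (n : ℝ) * ((n : ℝ) - 1)
  else if k = -1 then -4 * (n : ℝ) ^ 2
  else if k = 0 then 2 * (3 * (n : ℝ) ^ 2 + 3 * (n : ℝ) + 1)
  else if k = 1 then -4 * ((n : ℝ) + 1) ^ 2
  else if k = 2 then ((n : ℝ) + 1) * ((n : ℝ) + 2)
  else 0

/-- the sum ∑_{k=-2}^{2} χ_{k,n} f(n+k), terms with n+k<0 omitted -/
noncomputable def sumChi (n : ℕ) (f : ℕ → ℝ) : ℝ :=
  ∑ k ∈ Finset.Icc (-2 : ℤ) 2,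
    if 0 ≤ (n : ℤ) + k then chiC n k * f ((n : ℤ) + k).toNat else 0

noncomputable def besselI0 (z : ℝ) : ℝ := ∑' k : ℕ, (z / 2) ^ (2 * k) / (k.factorial : ℝ) ^ 2

noncomputable def besselI1 (z : ℝ) : ℝ :=
  ∑' k : ℕ, (z / 2) ^ (2 * k + 1) / ((k.factorial : ℝ) * ((k + 1).factorial : ℝ))

noncomputable def psiH (k : ℕ) : ℝ := ∑ j ∈ Finset.range k, (1 : ℝ) / ((j : ℝ) + 1)

noncomputable def besselS0 (z : ℝ) : ℝ :=
  ∑' k : ℕ, psiH k * (z / 2) ^ (2 * k) / (k.factorial : ℝ) ^ 2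

noncomputable def besselS1 (z : ℝ) : ℝ :=
  -(1 / 2) * ∑' k : ℕ, (psiH (k + 1) + psiH k) * (z / 2) ^ (2 * k + 1) /
    ((k.factorial : ℝ) * ((k + 1).factorial : ℝ))

noncomputable def vPol (γ : ℝ) (n : ℕ) (r : ℝ) : ℝ :=
  ∑ m ∈ Finset.range (n / 2 + 1), acoef γ n (2 * m) * r ^ (2 * m)

noncomputable def wPol (γ : ℝ) (n : ℕ) (r : ℝ) : ℝ :=
  ∑ m ∈ Finset.range ((n - 1) / 2 + 1), acoef γ n (2 * m + 1) * r ^ (2 * m + 1)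

noncomputable def vTil (γ : ℝ) (n : ℕ) (r : ℝ) : ℝ :=
  2 * ∑ m ∈ Finset.Icc 1 (n / 2), (m : ℝ) * acoef γ n (2 * m) * r ^ (2 * m)
    - γ * ∑ m ∈ Finset.range ((n - 1) / 2 + 1), acoef γ n (2 * m + 1) * r ^ (2 * m + 2)

noncomputable def wTil (γ : ℝ) (n : ℕ) (r : ℝ) : ℝ :=
  2 * ∑ m ∈ Finset.Icc 1 ((n - 1) / 2), (m : ℝ) * acoef γ n (2 * m + 1) * r ^ (2 * m + 1)
    - γ * ∑ m ∈ Finset.range (n / 2 + 1), acoef γ n (2 * m) * r ^ (2 * m + 1)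

noncomputable def phiF (γ : ℝ) (n : ℕ) (r : ℝ) : ℝ :=
  -besselI0 (γ * r) * vPol γ n r + besselI1 (γ * r) * wPol γ n r

noncomputable def phiHat (γ : ℝ) (n : ℕ) (r : ℝ) : ℝ :=
  (-(Real.eulerMascheroniConstant + Real.log (γ / 2)) * besselI0 (γ * r) + besselS0 (γ * r)) * vPol γ n r
    + (1 / (γ * r) + (Real.eulerMascheroniConstant + Real.log (γ / 2)) * besselI1 (γ * r)
        + besselS1 (γ * r)) * wPol γ n r

noncomputable def phiTil (γ : ℝ) (n : ℕ) (r : ℝ) : ℝ :=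
  -besselI0 (γ * r) * vTil γ n r + besselI1 (γ * r) * wTil γ n r

noncomputable def phiHatTil (γ : ℝ) (n : ℕ) (r : ℝ) : ℝ :=
  (-(Real.eulerMascheroniConstant + Real.log (γ / 2)) * besselI0 (γ * r) + besselS0 (γ * r)) * vTil γ n r
    + (1 / (γ * r) + (Real.eulerMascheroniConstant + Real.log (γ / 2)) * besselI1 (γ * r)
        + besselS1 (γ * r)) * wTil γ n r

noncomputable def etaF (κ cs cp : ℝ) (ℓ n : ℕ) (r : ℝ) : ℝ :=
  (-(ℓ : ℝ)) ^ (ℓ - 1) / (κ ^ 2 * r ^ 2) *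
      sumChi n (fun j => phiF (κ / cs) j r - phiF (κ / cp) j r)
    + (-1 : ℝ) ^ (ℓ - 1) / cp ^ 2 * phiF (κ / cp) n r
    + ((ℓ : ℝ) - 1) / cs ^ 2 * phiF (κ / cs) n r

noncomputable def xiF (κ cs cp : ℝ) (ℓ n : ℕ) (r : ℝ) : ℝ :=
  (-(ℓ : ℝ)) ^ (ℓ - 1) / (κ ^ 2 * r ^ 2) *
      sumChi n (fun j => phiHat (κ / cs) j r - phiHat (κ / cp) j r)
    + (-1 : ℝ) ^ (ℓ - 1) / cp ^ 2 * phiHat (κ / cp) n r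
    + ((ℓ : ℝ) - 1) / cs ^ 2 * phiHat (κ / cs) n r

noncomputable def etaTil (κ cs cp : ℝ) (ℓ n : ℕ) (r : ℝ) : ℝ :=
  (-(ℓ : ℝ)) ^ (ℓ - 1) / (κ ^ 2 * r ^ 2) *
      sumChi n (fun j => phiTil (κ / cs) j r - 2 * phiF (κ / cs) j r
        + 2 * phiF (κ / cp) j r - phiTil (κ / cp) j r)
    + (-1 : ℝ) ^ (ℓ - 1) / cp ^ 2 * phiTil (κ / cp) n r
    + ((ℓ : ℝ) - 1) / cs ^ 2 * phiTil (κ / cs) n r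

noncomputable def xiTil (κ cs cp : ℝ) (ℓ n : ℕ) (r : ℝ) : ℝ :=
  (-(ℓ : ℝ)) ^ (ℓ - 1) / (κ ^ 2 * r ^ 2) *
      sumChi n (fun j => phiHatTil (κ / cs) j r - 2 * phiHat (κ / cs) j r
        + 2 * phiHat (κ / cp) j r - phiHatTil (κ / cp) j r)
    + (-1 : ℝ) ^ (ℓ - 1) / cp ^ 2 * phiHatTil (κ / cp) n r
    + ((ℓ : ℝ) - 1) / cs ^ 2 * phiHatTil (κ / cs) n r

theorem acoef_zero (γ : ℝ) (n : ℕ) : acoef γ n 0 = 1 := by rw [acoef]; simp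

theorem acoef_of_lt (γ : ℝ) {n m : ℕ} (h1 : m ≠ 0) (h2 : n < m) : acoef γ n m = 0 := by
  rw [acoef]; simp [h1, h2]

theorem sum_range_cast (n : ℕ) : ∑ k ∈ Finset.range n, (k:ℝ) = n*((n:ℝ)-1)/2 := by
  induction n with
  | zero => simp
  | succ p ih => rw [Finset.sum_range_succ, ih]; push_cast; ring

theorem sum_icc_real (n : ℕ) (hn : 1 ≤ n) :
    ∑ k ∈ Finset.Icc 0 (n-1), ((n - k + 1 : ℕ) : ℝ) = ((n:ℝ)^2 + 3*n)/2 := by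
  rw [← Finset.Ico_add_one_right_eq_Icc, show n-1+1 = n from by omega, ← Finset.range_eq_Ico]
  rw [Finset.sum_congr rfl (fun k hk => by
    have hk' : k ≤ n := le_of_lt (Finset.mem_range.mp hk)
    rw [Nat.cast_add, Nat.cast_sub hk']
    push_cast; ring_nf
    : ∀ k ∈ Finset.range n, ((n - k + 1 : ℕ) : ℝ) = (1 + (n:ℝ)) - k)]
  rw [Finset.sum_sub_distrib, Finset.sum_const, Finset.card_range, sum_range_cast]
  push_cast; ring

theorem key_coef (γ : ℝ) (hγ : γ ≠ 0) (n : ℕ) :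
    γ * acoef γ n 1 / 2 - acoef γ n 2 = -γ^2 * ((n:ℝ)^2 + 3*n)/8 := by
  match n with
  | 0 => rw [acoef_of_lt γ one_ne_zero (by norm_num), acoef_of_lt γ two_ne_zero (by norm_num)]; norm_num
  | 1 =>
    rw [acoef_of_lt γ two_ne_zero (by norm_num)]
    rw [show acoef γ 1 1 = -(γ/1) * acoef γ 0 0 by rw [acoef]; norm_num]
    rw [acoef_zero]; push_cast; field_simp; ring
  | (p+2) =>
    set n := p + 2 with hn
    have h1 : acoef γ n 1 = (1 / (2 * γ * (1:ℝ))) *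
      (4 * acoef γ n 2
        - γ ^ 2 * ∑ k ∈ (Finset.Icc 0 (n - 1)).attach,
            ((n - (k : ℕ) + 1 : ℕ) : ℝ) * acoef γ (k : ℕ) 0) := by
      rw [acoef]
      have e1 : ¬ ((1:ℕ) = 0) := one_ne_zero
      have e2 : ¬ (n < 1) := by omega
      have e3 : ¬ ((1:ℕ) = n) := by omega
      simp only [if_neg e1, if_neg e2, if_neg e3]
      norm_num
    rw [Finset.sum_attach (Finset.Icc 0 (n-1)) (fun k => ((n - k + 1 : ℕ) : ℝ) * acoef γ k 0)] at h1
    simp only [acoef_zero, mul_one] at h1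
    rw [sum_icc_real n (by omega)] at h1
    rw [h1]
    field_simp
    ring
theorem icc_expand : Finset.Icc (-2 : ℤ) 2 = {-2,-1,0,1,2} := by decide

theorem chi_identity (n : ℕ) :
    ∑ k ∈ Finset.Icc (-2 : ℤ) 2,
      (if 0 ≤ (n : ℤ) + k then
        chiC n k * ((((n : ℤ) + k).toNat : ℝ)^2 + 3*(((n : ℤ) + k).toNat : ℝ) + 2) else 0) = 4 := by
  rw [icc_expand]
  match n with
  | 0 => norm_num [chiC, show (((2:ℤ).toNat :ℝ)) = 2 from by simp, show (((1:ℤ).toNat :ℝ)) = 1 from by simp]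
  | 1 => norm_num [chiC, show (((2:ℤ).toNat :ℝ)) = 2 from by simp, show (((3:ℤ).toNat :ℝ)) = 3 from by simp, show (((1:ℤ).toNat :ℝ)) = 1 from by simp]
  | (p+2) =>
    have h1 : ((p:ℤ) + 2 + -2).toNat = p := by omega
    have h2 : ((p:ℤ) + 2 + -1).toNat = p + 1 := by omega
    have h3 : ((p:ℤ) + 2 + 0).toNat = p + 2 := by omega
    have h4 : ((p:ℤ) + 2 + 1).toNat = p + 3 := by omega
    have h5 : ((p:ℤ) + 2 + 2).toNat = p + 4 := by omega
    push_cast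
    rw [Finset.sum_insert (by decide), Finset.sum_insert (by decide),
      Finset.sum_insert (by decide), Finset.sum_insert (by decide), Finset.sum_singleton]
    rw [if_pos (by omega), if_pos (by omega), if_pos (by omega), if_pos (by omega), if_pos (by omega)]
    rw [h1, h2, h3, h4, h5]
    simp only [chiC]
    norm_num
    push_cast
    ring
theorem summ0 (x : ℝ) (hx : 0 ≤ x) : Summable (fun k : ℕ => x^k / ((k.factorial : ℝ))^2) := by
  apply Summable.of_nonneg_of_le (fun k => by positivity)
    (fun k => ?_) (Real.summable_pow_div_factorial x)
  apply div_le_div_of_nonneg_left (by positivity) (by positivity)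
  · calc ((k.factorial : ℝ)) = k.factorial * 1 := by ring
      _ ≤ ((k.factorial:ℝ))^2 := by
        rw [sq]; apply mul_le_mul_of_nonneg_left _ (by positivity)
        exact_mod_cast Nat.one_le_iff_ne_zero.mpr (Nat.factorial_ne_zero k)

theorem summ1 (x : ℝ) (hx : 0 ≤ x) :
    Summable (fun k : ℕ => x^k / ((k.factorial : ℝ) * ((k+1).factorial : ℝ))) := by
  apply Summable.of_nonneg_of_le (fun k => by positivity)
    (fun k => ?_) (Real.summable_pow_div_factorial x)
  apply div_le_div_of_nonneg_left (by positivity) (by positivity)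
  calc ((k.factorial : ℝ)) = k.factorial * 1 := by ring
    _ ≤ (k.factorial : ℝ) * ((k+1).factorial : ℝ) := by
      apply mul_le_mul_of_nonneg_left _ (by positivity)
      exact_mod_cast Nat.one_le_iff_ne_zero.mpr (Nat.factorial_ne_zero (k+1))

theorem besselI0_eq (z : ℝ) : besselI0 z = ∑' k : ℕ, ((z/2)^2)^k / ((k.factorial : ℝ))^2 := by
  unfold besselI0; exact tsum_congr fun k => by rw [← pow_mul]

theorem besselI1_eq (z : ℝ) :
    besselI1 z = ∑' k : ℕ, (z/2) * ((z/2)^2)^k / ((k.factorial : ℝ) * ((k+1).factorial : ℝ)) := by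
  unfold besselI1; exact tsum_congr fun k => by rw [← pow_mul, pow_succ, mul_comm ((z/2)^(2*k))]

theorem geom_sum_le : ∑' k : ℕ, ((1:ℝ)/4)^k = 4/3 := by
  rw [tsum_geometric_of_lt_one (by norm_num) (by norm_num)]; norm_num

set_option maxHeartbeats 1000000 in
theorem R0_bound (z : ℝ) (hz : |z| ≤ 1) : |besselI0 z - 1 - z^2/4| ≤ z^4 := by
  set x : ℝ := (z/2)^2 with hxdef
  have hx : 0 ≤ x := by positivity
  have hx4 : x ≤ 1/4 := by
    rw [hxdef, div_pow]
    have : z^2 ≤ 1 := by nlinarith [abs_nonneg z, sq_abs z]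
    nlinarith
  have hs := summ0 x hx
  have hs1 : Summable (fun k : ℕ => x^(k+1) / (((k+1).factorial : ℝ))^2) :=
    (summable_nat_add_iff 1).2 hs
  have hs2 : Summable (fun k : ℕ => x^(k+2) / (((k+2).factorial : ℝ))^2) :=
    (summable_nat_add_iff 2).2 hs
  have e1 : besselI0 z = 1 + (x + ∑' k : ℕ, x^(k+2) / (((k+2).factorial : ℝ))^2) := by
    rw [besselI0_eq, Summable.tsum_eq_zero_add hs, Summable.tsum_eq_zero_add hs1]
    norm_num [Nat.factorial]
  have hxz : x = z^2/4 := by rw [hxdef]; ring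
  have tail_nonneg : (0:ℝ) ≤ ∑' k : ℕ, x^(k+2) / (((k+2).factorial : ℝ))^2 :=
    tsum_nonneg fun k => by positivity
  have hgs : Summable (fun k : ℕ => x^2 * (1/4:ℝ)^k) :=
    (summable_geometric_of_lt_one (by norm_num) (by norm_num)).mul_left _
  have tail_le : ∑' k : ℕ, x^(k+2) / (((k+2).factorial : ℝ))^2 ≤ x^2 * (4/3) := by
    calc ∑' k : ℕ, x^(k+2) / (((k+2).factorial : ℝ))^2
        ≤ ∑' k : ℕ, x^2 * (1/4:ℝ)^k := by
          apply Summable.tsum_le_tsum _ hs2 hgs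
          intro k
          have h1 : x^(k+2) / (((k+2).factorial : ℝ))^2 ≤ x^(k+2) := by
            apply div_le_self (by positivity)
            have : (1:ℝ) ≤ ((k+2).factorial : ℝ) := by
              exact_mod_cast Nat.one_le_iff_ne_zero.mpr (Nat.factorial_ne_zero (k+2))
            nlinarith
          calc x^(k+2) / (((k+2).factorial : ℝ))^2 ≤ x^(k+2) := h1
            _ = x^2 * x^k := by ring
            _ ≤ x^2 * (1/4)^k := by
              apply mul_le_mul_of_nonneg_left (pow_le_pow_left₀ hx hx4 k) (by positivity)
      _ = x^2 * (4/3) := by rw [tsum_mul_left, geom_sum_le]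
  rw [e1]
  rw [show 1 + (x + ∑' k : ℕ, x^(k+2) / (((k+2).factorial : ℝ))^2) - 1 - z^2/4
      = ∑' k : ℕ, x^(k+2) / (((k+2).factorial : ℝ))^2 from by rw [hxz]; ring]
  rw [abs_of_nonneg tail_nonneg]
  calc (∑' k : ℕ, x^(k+2) / (((k+2).factorial : ℝ))^2) ≤ x^2*(4/3) := tail_le
    _ ≤ z^4 := by
      rw [hxz]
      have h4 : (0:ℝ) ≤ z^4 := by positivity
      nlinarith [h4]

set_option maxHeartbeats 1000000 in
theorem R1_bound (z : ℝ) (hz : |z| ≤ 1) : |besselI1 z - z/2| ≤ |z|^3 := by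
  set x : ℝ := (z/2)^2 with hxdef
  have hx : 0 ≤ x := by positivity
  have hx4 : x ≤ 1/4 := by
    rw [hxdef, div_pow]
    have : z^2 ≤ 1 := by nlinarith [abs_nonneg z, sq_abs z]
    nlinarith
  have hs : Summable (fun k : ℕ => (z/2) * x^k / ((k.factorial : ℝ) * ((k+1).factorial : ℝ))) := by
    have := (summ1 x hx).mul_left (z/2)
    apply this.congr
    intro k
    rw [mul_div_assoc]
  have hs1 : Summable (fun k : ℕ => (z/2) * x^(k+1) / (((k+1).factorial : ℝ) * ((k+2).factorial : ℝ))) :=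
    ((summable_nat_add_iff 1).2 hs).congr (fun k => by norm_num)
  have e1 : besselI1 z = z/2 + ∑' k : ℕ,
      (z/2) * x^(k+1) / (((k+1).factorial : ℝ) * ((k+2).factorial : ℝ)) := by
    rw [besselI1_eq, Summable.tsum_eq_zero_add hs]
    norm_num [Nat.factorial]
  have habs : ∀ k : ℕ, |(z/2) * x^(k+1) / (((k+1).factorial : ℝ) * ((k+2).factorial : ℝ))|
      ≤ (|z|/2) * x * (1/4:ℝ)^k := by
    intro k
    rw [abs_div, abs_mul]
    have hfac : (1:ℝ) ≤ ((k+1).factorial : ℝ) * ((k+2).factorial : ℝ) := by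
      have h1 : (1:ℝ) ≤ ((k+1).factorial : ℝ) := by
        exact_mod_cast Nat.one_le_iff_ne_zero.mpr (Nat.factorial_ne_zero (k+1))
      have h2 : (1:ℝ) ≤ ((k+2).factorial : ℝ) := by
        exact_mod_cast Nat.one_le_iff_ne_zero.mpr (Nat.factorial_ne_zero (k+2))
      nlinarith
    have habs2 : |((k+1).factorial : ℝ) * ((k+2).factorial : ℝ)| = ((k+1).factorial : ℝ) * ((k+2).factorial : ℝ) := by
      apply abs_of_pos; positivity
    rw [habs2]
    calc |z/2| * |x^(k+1)| / (((k+1).factorial : ℝ) * ((k+2).factorial : ℝ))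
        ≤ |z/2| * |x^(k+1)| / 1 := by
          apply div_le_div_of_nonneg_left (by positivity) (by norm_num) hfac
      _ = (|z|/2) * (x * x^k) := by rw [abs_div, abs_of_pos (by norm_num : (0:ℝ) < 2), abs_of_nonneg (pow_nonneg hx _)]; ring
      _ ≤ (|z|/2) * (x * (1/4)^k) := by
          apply mul_le_mul_of_nonneg_left _ (by positivity)
          exact mul_le_mul_of_nonneg_left (pow_le_pow_left₀ hx hx4 k) hx
      _ = (|z|/2) * x * (1/4)^k := by ring
  have hgs : Summable (fun k : ℕ => (|z|/2) * x * (1/4:ℝ)^k) :=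
    (summable_geometric_of_lt_one (by norm_num) (by norm_num)).mul_left _
  have hsabs : Summable (fun k : ℕ => |(z/2) * x^(k+1) / (((k+1).factorial : ℝ) * ((k+2).factorial : ℝ))|) :=
    Summable.of_nonneg_of_le (fun k => abs_nonneg _) habs hgs
  have tail_bound : |∑' k : ℕ, (z/2) * x^(k+1) / (((k+1).factorial : ℝ) * ((k+2).factorial : ℝ))|
      ≤ (|z|/2) * x * (4/3) := by
    calc |∑' k : ℕ, (z/2) * x^(k+1) / (((k+1).factorial : ℝ) * ((k+2).factorial : ℝ))|
        ≤ ∑' k : ℕ, |(z/2) * x^(k+1) / (((k+1).factorial : ℝ) * ((k+2).factorial : ℝ))| := by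
          have := norm_tsum_le_tsum_norm (f := fun k : ℕ => (z/2) * x^(k+1) / (((k+1).factorial : ℝ) * ((k+2).factorial : ℝ))) (by simp only [Real.norm_eq_abs]; exact hsabs)
          simp only [Real.norm_eq_abs] at this
          exact this
      _ ≤ ∑' k : ℕ, (|z|/2) * x * (1/4:ℝ)^k := Summable.tsum_le_tsum habs hsabs hgs
      _ = (|z|/2) * x * (4/3) := by rw [tsum_mul_left, geom_sum_le]
  rw [e1]
  rw [show z/2 + (∑' k : ℕ, (z/2) * x^(k+1) / (((k+1).factorial : ℝ) * ((k+2).factorial : ℝ))) - z/2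
      = ∑' k : ℕ, (z/2) * x^(k+1) / (((k+1).factorial : ℝ) * ((k+2).factorial : ℝ)) from by ring]
  calc |∑' k : ℕ, (z/2) * x^(k+1) / (((k+1).factorial : ℝ) * ((k+2).factorial : ℝ))|
      ≤ (|z|/2) * x * (4/3) := tail_bound
    _ ≤ |z|^3 := by
      rw [hxdef]
      have h1 : (z/2)^2 = |z|^2/4 := by rw [div_pow, sq_abs]; norm_num
      rw [h1]
      have h2 : (0:ℝ) ≤ |z| := abs_nonneg z
      nlinarith [pow_nonneg h2 3]

noncomputable def Ac (γ : ℝ) (m : ℕ) : ℝ := -γ^2 * ((m:ℝ)^2 + 3*m + 2)/8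
noncomputable def CvC (γ : ℝ) (n : ℕ) : ℝ := ∑ m ∈ Finset.range (n/2+1), |acoef γ n (2*m+4)|
noncomputable def CwC (γ : ℝ) (n : ℕ) : ℝ := ∑ m ∈ Finset.range ((n-1)/2), |acoef γ n (2*m+3)|
noncomputable def BvC (γ : ℝ) (n : ℕ) : ℝ := 1 + |acoef γ n 2| + CvC γ n
noncomputable def BwC (γ : ℝ) (n : ℕ) : ℝ := |acoef γ n 1| + CwC γ n
noncomputable def phiCst (γ : ℝ) (n : ℕ) : ℝ :=
  γ^2*|acoef γ n 2|/4 + (1+γ^2/4)*CvC γ n + γ^4*BvC γ n + γ*CwC γ n/2 + γ^3*BwC γ n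

theorem CvC_nonneg (γ : ℝ) (n : ℕ) : 0 ≤ CvC γ n := Finset.sum_nonneg fun _ _ => abs_nonneg _
theorem CwC_nonneg (γ : ℝ) (n : ℕ) : 0 ≤ CwC γ n := Finset.sum_nonneg fun _ _ => abs_nonneg _
theorem BvC_nonneg (γ : ℝ) (n : ℕ) : 0 ≤ BvC γ n := by
  unfold BvC; have := CvC_nonneg γ n; have := abs_nonneg (acoef γ n 2); linarith
theorem BwC_nonneg (γ : ℝ) (n : ℕ) : 0 ≤ BwC γ n := by
  unfold BwC; have := CwC_nonneg γ n; have := abs_nonneg (acoef γ n 1); linarith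
theorem phiCst_nonneg (γ : ℝ) (hγ : 0 < γ) (n : ℕ) : 0 ≤ phiCst γ n := by
  unfold phiCst
  have h1 := CvC_nonneg γ n; have h2 := CwC_nonneg γ n
  have h3 := BvC_nonneg γ n; have h4 := BwC_nonneg γ n
  have h5 := abs_nonneg (acoef γ n 2)
  have hγ2 : (0:ℝ) < γ^2 := by positivity
  have hγ3 : (0:ℝ) < γ^3 := by positivity
  have hγ4 : (0:ℝ) < γ^4 := by positivity
  nlinarith [mul_nonneg hγ2.le h5, mul_nonneg (mul_nonneg hγ2.le (by norm_num : (0:ℝ) ≤ 1)) h1,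
    mul_nonneg hγ4.le h3, mul_nonneg hγ.le h2, mul_nonneg hγ3.le h4, mul_nonneg hγ2.le h1]

theorem abs_add₅ (a b c d e : ℝ) : |a+b+c+d+e| ≤ |a|+|b|+|c|+|d|+|e| := by
  calc |a+b+c+d+e| ≤ |a+b+c+d| + |e| := abs_add_le _ _
    _ ≤ (|a+b+c| + |d|) + |e| := by have := abs_add_le (a+b+c) d; linarith
    _ ≤ ((|a+b| + |c|) + |d|) + |e| := by have := abs_add_le (a+b) c; linarith
    _ ≤ |a|+|b|+|c|+|d|+|e| := by have := abs_add_le a b; linarith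

theorem abs_mul_le {a b A B : ℝ} (ha : |a| ≤ A) (hb : |b| ≤ B) : |a * b| ≤ A * B := by
  rw [abs_mul]; exact mul_le_mul ha hb (abs_nonneg b) ((abs_nonneg a).trans ha)

theorem vPol_split (γ : ℝ) (n : ℕ) (r : ℝ) (hr0 : 0 ≤ r) (hr1 : r ≤ 1) :
    |vPol γ n r - 1 - acoef γ n 2 * r^2| ≤ CvC γ n * r^4 := by
  have hext : vPol γ n r = ∑ m ∈ Finset.range (n/2+3), acoef γ n (2*m) * r^(2*m) := by
    rw [vPol]
    apply Finset.sum_subset (Finset.range_subset_range.2 (by omega))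
    intro m hm hnm
    simp only [Finset.mem_range] at hm hnm
    have h1 : n < 2*m := by omega
    rw [acoef_of_lt γ (by omega) h1]; ring
  rw [hext, show n/2+3 = (n/2+2)+1 from rfl, Finset.sum_range_succ',
    show n/2+2 = (n/2+1)+1 from rfl, Finset.sum_range_succ']
  simp only [Nat.mul_zero, pow_zero, acoef_zero, mul_one]
  rw [show ∀ x y z w : ℝ, x + y + z - z - w = x + (y - w) from fun x y z w => by ring]
  have e2 : acoef γ n (2*(0+1)) * r^(2*(0+1)) = acoef γ n 2 * r^2 := by norm_num
  rw [e2]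
  simp only [sub_self, add_zero]
  calc |∑ m ∈ Finset.range (n/2+1), acoef γ n (2*(m+1+1)) * r^(2*(m+1+1))|
      ≤ ∑ m ∈ Finset.range (n/2+1), |acoef γ n (2*(m+1+1)) * r^(2*(m+1+1))| :=
        Finset.abs_sum_le_sum_abs _ _
    _ ≤ ∑ m ∈ Finset.range (n/2+1), |acoef γ n (2*m+4)| * r^4 := by
        apply Finset.sum_le_sum
        intro m _
        rw [show 2*(m+1+1) = (2*m+4) from by ring, abs_mul, abs_of_nonneg (by positivity : (0:ℝ) ≤ r^(2*m+4))]
        apply mul_le_mul_of_nonneg_left _ (abs_nonneg _)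
        calc r^(2*m+4) = r^(2*m) * r^4 := by ring
          _ ≤ 1 * r^4 := by
              apply mul_le_mul_of_nonneg_right (pow_le_one₀ hr0 hr1) (by positivity)
          _ = r^4 := by ring
    _ = CvC γ n * r^4 := by rw [CvC, Finset.sum_mul]

theorem wPol_split (γ : ℝ) (n : ℕ) (r : ℝ) (hr0 : 0 ≤ r) (hr1 : r ≤ 1) :
    |wPol γ n r - acoef γ n 1 * r| ≤ CwC γ n * r^3 := by
  rw [wPol, show (n-1)/2+1 = ((n-1)/2)+1 from rfl, Finset.sum_range_succ']
  simp only [Nat.mul_zero, zero_add, pow_one]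
  rw [show ∀ x y : ℝ, x + y - y = x from fun x y => by ring]
  calc |∑ m ∈ Finset.range ((n-1)/2), acoef γ n (2*(m+1)+1) * r^(2*(m+1)+1)|
      ≤ ∑ m ∈ Finset.range ((n-1)/2), |acoef γ n (2*(m+1)+1) * r^(2*(m+1)+1)| :=
        Finset.abs_sum_le_sum_abs _ _
    _ ≤ ∑ m ∈ Finset.range ((n-1)/2), |acoef γ n (2*m+3)| * r^3 := by
        apply Finset.sum_le_sum
        intro m _
        rw [show 2*(m+1)+1 = 2*m+3 from by ring, abs_mul, abs_of_nonneg (by positivity : (0:ℝ) ≤ r^(2*m+3))]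
        apply mul_le_mul_of_nonneg_left _ (abs_nonneg _)
        calc r^(2*m+3) = r^(2*m) * r^3 := by ring
          _ ≤ 1 * r^3 := by
              apply mul_le_mul_of_nonneg_right (pow_le_one₀ hr0 hr1) (by positivity)
          _ = r^3 := by ring
    _ = CwC γ n * r^3 := by rw [CwC, Finset.sum_mul]

theorem vPol_bound (γ : ℝ) (n : ℕ) (r : ℝ) (hr0 : 0 ≤ r) (hr1 : r ≤ 1) :
    |vPol γ n r| ≤ BvC γ n := by
  have h := vPol_split γ n r hr0 hr1
  have hr2 : r^2 ≤ 1 := pow_le_one₀ hr0 hr1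
  have hr4 : r^4 ≤ 1 := pow_le_one₀ hr0 hr1
  have h2 : |acoef γ n 2 * r^2| ≤ |acoef γ n 2| := by
    rw [abs_mul, abs_of_nonneg (by positivity : (0:ℝ) ≤ r^2)]
    calc |acoef γ n 2| * r^2 ≤ |acoef γ n 2| * 1 := mul_le_mul_of_nonneg_left hr2 (abs_nonneg _)
      _ = _ := mul_one _
  have h3 : CvC γ n * r^4 ≤ CvC γ n := by
    calc CvC γ n * r^4 ≤ CvC γ n * 1 := mul_le_mul_of_nonneg_left hr4 (CvC_nonneg γ n)
      _ = _ := mul_one _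
  calc |vPol γ n r| = |(vPol γ n r - 1 - acoef γ n 2 * r^2) + 1 + acoef γ n 2 * r^2| := by ring_nf
    _ ≤ |(vPol γ n r - 1 - acoef γ n 2 * r^2) + 1| + |acoef γ n 2 * r^2| := abs_add_le _ _
    _ ≤ (|vPol γ n r - 1 - acoef γ n 2 * r^2| + |(1:ℝ)|) + |acoef γ n 2 * r^2| := by
        have := abs_add_le (vPol γ n r - 1 - acoef γ n 2 * r^2) (1:ℝ); linarith
    _ ≤ BvC γ n := by rw [BvC]; rw [abs_one]; linarith

theorem wPol_bound (γ : ℝ) (n : ℕ) (r : ℝ) (hr0 : 0 ≤ r) (hr1 : r ≤ 1) :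
    |wPol γ n r| ≤ BwC γ n * r := by
  have h := wPol_split γ n r hr0 hr1
  have h3 : CwC γ n * r^3 ≤ CwC γ n * r := by
    have : r^3 ≤ r := by
      calc r^3 ≤ r^1 := pow_le_pow_of_le_one hr0 hr1 (by norm_num)
        _ = r := pow_one r
    exact mul_le_mul_of_nonneg_left this (CwC_nonneg γ n)
  calc |wPol γ n r| = |(wPol γ n r - acoef γ n 1 * r) + acoef γ n 1 * r| := by ring_nf
    _ ≤ |wPol γ n r - acoef γ n 1 * r| + |acoef γ n 1 * r| := abs_add_le _ _
    _ ≤ CwC γ n * r^3 + |acoef γ n 1| * r := by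
        rw [abs_mul, abs_of_nonneg hr0]; linarith
    _ ≤ BwC γ n * r := by rw [BwC]; nlinarith [CwC_nonneg γ n]

theorem phi_expand (γ : ℝ) (hγ : 0 < γ) (n : ℕ) (r : ℝ)
    (hr : 0 < r) (hr1 : r ≤ 1) (hzr : γ * r ≤ 1) :
    |phiF γ n r - (-1 + Ac γ n * r^2)| ≤ phiCst γ n * r^4 := by
  have hr0 : (0:ℝ) ≤ r := hr.le
  have hzr0 : (0:ℝ) ≤ γ * r := by positivity
  have hAc : Ac γ n = γ * acoef γ n 1/2 - acoef γ n 2 - γ^2/4 := by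
    have hk := key_coef γ (ne_of_gt hγ) n
    unfold Ac; linarith
  have key : phiF γ n r - (-1 + Ac γ n * r^2) =
      (-(γ^2 * acoef γ n 2/4)*r^4)
      + (-((1+(γ*r)^2/4) * (vPol γ n r - 1 - acoef γ n 2 * r^2)))
      + (-((besselI0 (γ*r) - 1 - (γ*r)^2/4) * vPol γ n r))
      + ((γ*r/2) * (wPol γ n r - acoef γ n 1 * r))
      + ((besselI1 (γ*r) - (γ*r)/2) * wPol γ n r) := by
    rw [hAc, phiF]
    ring
  have hR0 : |besselI0 (γ*r) - 1 - (γ*r)^2/4| ≤ γ^4 * r^4 := by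
    have h := R0_bound (γ*r) (by rw [abs_of_nonneg hzr0]; exact hzr)
    calc |besselI0 (γ*r) - 1 - (γ*r)^2/4| ≤ (γ*r)^4 := h
      _ = γ^4 * r^4 := by ring
  have hR1 : |besselI1 (γ*r) - (γ*r)/2| ≤ γ^3 * r^3 := by
    have h := R1_bound (γ*r) (by rw [abs_of_nonneg hzr0]; exact hzr)
    calc |besselI1 (γ*r) - (γ*r)/2| ≤ |γ*r|^3 := h
      _ = γ^3 * r^3 := by rw [abs_of_nonneg hzr0]; ring
  have hV := vPol_split γ n r hr0 hr1
  have hW := wPol_split γ n r hr0 hr1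
  have hv := vPol_bound γ n r hr0 hr1
  have hw := wPol_bound γ n r hr0 hr1
  have b1 : |(-(γ^2 * acoef γ n 2/4)*r^4)| ≤ (γ^2*|acoef γ n 2|/4) * r^4 := by
    rw [abs_mul, abs_neg]
    apply mul_le_mul _ (le_of_eq (abs_of_nonneg (by positivity))) (abs_nonneg _) (by positivity)
    rw [show γ^2 * acoef γ n 2/4 = (γ^2/4) * acoef γ n 2 from by ring, abs_mul,
      abs_of_nonneg (by positivity : (0:ℝ) ≤ γ^2/4)]
    apply le_of_eq; ring
  have b2 : |(-((1+(γ*r)^2/4) * (vPol γ n r - 1 - acoef γ n 2 * r^2)))|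
      ≤ (1+γ^2/4) * (CvC γ n * r^4) := by
    rw [abs_neg]
    apply abs_mul_le _ hV
    rw [abs_of_nonneg (by positivity)]
    have hr2 : r^2 ≤ 1 := pow_le_one₀ hr0 hr1
    nlinarith [mul_nonneg (sq_nonneg γ) (sub_nonneg.2 hr2)]
  have b3 : |(-((besselI0 (γ*r) - 1 - (γ*r)^2/4) * vPol γ n r))| ≤ (γ^4*r^4) * BvC γ n := by
    rw [abs_neg]; exact abs_mul_le hR0 hv
  have b4 : |((γ*r/2) * (wPol γ n r - acoef γ n 1 * r))| ≤ (γ*r/2) * (CwC γ n * r^3) := by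
    apply abs_mul_le _ hW
    rw [abs_of_nonneg (by positivity)]
  have b5 : |((besselI1 (γ*r) - (γ*r)/2) * wPol γ n r)| ≤ (γ^3*r^3) * (BwC γ n * r) :=
    abs_mul_le hR1 hw
  calc |phiF γ n r - (-1 + Ac γ n * r^2)|
      = |(-(γ^2 * acoef γ n 2/4)*r^4)
      + (-((1+(γ*r)^2/4) * (vPol γ n r - 1 - acoef γ n 2 * r^2)))
      + (-((besselI0 (γ*r) - 1 - (γ*r)^2/4) * vPol γ n r))
      + ((γ*r/2) * (wPol γ n r - acoef γ n 1 * r))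
      + ((besselI1 (γ*r) - (γ*r)/2) * wPol γ n r)| := by rw [key]
    _ ≤ _ := abs_add₅ _ _ _ _ _
    _ ≤ (γ^2*|acoef γ n 2|/4) * r^4 + (1+γ^2/4) * (CvC γ n * r^4)
        + (γ^4*r^4) * BvC γ n + (γ*r/2) * (CwC γ n * r^3) + (γ^3*r^3) * (BwC γ n * r) := by
      exact add_le_add (add_le_add (add_le_add (add_le_add b1 b2) b3) b4) b5
    _ = phiCst γ n * r^4 := by rw [phiCst]; ring

noncomputable def CS (γs γp : ℝ) (n : ℕ) : ℝ :=
  ∑ k ∈ Finset.Icc (-2 : ℤ) 2,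
    (if 0 ≤ (n : ℤ) + k then
      |chiC n k| * (phiCst γs ((n : ℤ) + k).toNat + phiCst γp ((n : ℤ) + k).toNat) else 0)

theorem CS_nonneg (γs γp : ℝ) (hs : 0 < γs) (hp : 0 < γp) (n : ℕ) : 0 ≤ CS γs γp n := by
  apply Finset.sum_nonneg
  intro k _
  split
  · exact mul_nonneg (abs_nonneg _) (add_nonneg (phiCst_nonneg _ hs _) (phiCst_nonneg _ hp _))
  · exact le_refl 0

theorem sum_expand (γs γp : ℝ) (hs : 0 < γs) (hp : 0 < γp) (n : ℕ) (r : ℝ)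
    (hr : 0 < r) (hr1 : r ≤ 1) (hsr : γs * r ≤ 1) (hpr : γp * r ≤ 1) :
    |sumChi n (fun j => phiF γs j r - phiF γp j r) - ((γp^2 - γs^2)/2) * r^2|
      ≤ CS γs γp n * r^4 := by
  have hAcdiff : ∀ j : ℕ, Ac γs j - Ac γp j = (γp^2-γs^2)/8 * ((j:ℝ)^2+3*j+2) := by
    intro j; unfold Ac; ring
  have hcoef : ∑ k ∈ Finset.Icc (-2 : ℤ) 2,
      (if 0 ≤ (n : ℤ) + k then
        chiC n k * (Ac γs ((n : ℤ) + k).toNat - Ac γp ((n : ℤ) + k).toNat) else 0)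
      = (γp^2 - γs^2)/2 := by
    have step : ∀ k ∈ Finset.Icc (-2 : ℤ) 2,
        (if 0 ≤ (n : ℤ) + k then
          chiC n k * (Ac γs ((n : ℤ) + k).toNat - Ac γp ((n : ℤ) + k).toNat) else 0)
        = (γp^2-γs^2)/8 * (if 0 ≤ (n : ℤ) + k then
            chiC n k * (((((n : ℤ) + k).toNat : ℝ))^2 + 3*((((n : ℤ) + k).toNat : ℝ)) + 2) else 0) := by
      intro k _
      split
      · rw [hAcdiff]; ring
      · ring
    rw [Finset.sum_congr rfl step, ← Finset.mul_sum, chi_identity n]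
    ring
  have hsplit : sumChi n (fun j => phiF γs j r - phiF γp j r) - ((γp^2 - γs^2)/2) * r^2
      = ∑ k ∈ Finset.Icc (-2 : ℤ) 2,
        (if 0 ≤ (n : ℤ) + k then
          chiC n k * ((phiF γs ((n : ℤ) + k).toNat r - (-1 + Ac γs ((n : ℤ) + k).toNat * r^2))
            - (phiF γp ((n : ℤ) + k).toNat r - (-1 + Ac γp ((n : ℤ) + k).toNat * r^2))) else 0) := by
    rw [sumChi, ← hcoef, Finset.sum_mul, ← Finset.sum_sub_distrib]
    apply Finset.sum_congr rfl
    intro k _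
    split
    · ring
    · ring
  rw [hsplit]
  calc |∑ k ∈ Finset.Icc (-2 : ℤ) 2, _| ≤ ∑ k ∈ Finset.Icc (-2 : ℤ) 2,
        |(if 0 ≤ (n : ℤ) + k then
          chiC n k * ((phiF γs ((n : ℤ) + k).toNat r - (-1 + Ac γs ((n : ℤ) + k).toNat * r^2))
            - (phiF γp ((n : ℤ) + k).toNat r - (-1 + Ac γp ((n : ℤ) + k).toNat * r^2))) else 0)| :=
      Finset.abs_sum_le_sum_abs _ _
    _ ≤ ∑ k ∈ Finset.Icc (-2 : ℤ) 2,
        (if 0 ≤ (n : ℤ) + k then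
          |chiC n k| * (phiCst γs ((n : ℤ) + k).toNat + phiCst γp ((n : ℤ) + k).toNat) else 0) * r^4 := by
      apply Finset.sum_le_sum
      intro k _
      split
      · set j := ((n : ℤ) + k).toNat
        have h1 := phi_expand γs hs j r hr hr1 hsr
        have h2 := phi_expand γp hp j r hr hr1 hpr
        calc |chiC n k * ((phiF γs j r - (-1 + Ac γs j * r^2))
              - (phiF γp j r - (-1 + Ac γp j * r^2)))|
            ≤ |chiC n k| * ((phiCst γs j + phiCst γp j) * r^4) := by
              apply abs_mul_le (le_refl _)
              calc |(phiF γs j r - (-1 + Ac γs j * r^2)) - (phiF γp j r - (-1 + Ac γp j * r^2))|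
                  ≤ |phiF γs j r - (-1 + Ac γs j * r^2)| + |phiF γp j r - (-1 + Ac γp j * r^2)| :=
                    abs_sub _ _
                _ ≤ phiCst γs j * r^4 + phiCst γp j * r^4 := add_le_add h1 h2
                _ = (phiCst γs j + phiCst γp j) * r^4 := by ring
          _ = |chiC n k| * (phiCst γs j + phiCst γp j) * r^4 := by ring
      · simp
    _ = CS γs γp n * r^4 := by rw [CS, Finset.sum_mul]

set_option maxHeartbeats 2000000 in
/-- η_{1,n}(r) = −1/(2c_p²) − 1/(2c_s²) + O(r²) as r → 0⁺. -/
theorem eta_one_asymptotics (κ cs cp : ℝ) (hκ : 0 < κ) (hcs : 0 < cs) (hcp : 0 < cp) (n : ℕ) :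
    (∃ ε > (0 : ℝ), ∃ M > (0 : ℝ), ∀ r : ℝ, 0 < r → r < ε →
      |etaF κ cs cp 1 n r - (-(1 / (2 * cp ^ 2)) - 1 / (2 * cs ^ 2))| ≤ M * r ^ 2) ∧
    Tendsto (fun r => etaF κ cs cp 1 n r) (nhdsWithin 0 (Set.Ioi 0))
      (nhds (-(1 / (2 * cp ^ 2)) - 1 / (2 * cs ^ 2))) := by
  set γs := κ / cs with hγsdef
  set γp := κ / cp with hγpdef
  have hγs : 0 < γs := by positivity
  have hγp : 0 < γp := by positivity
  set L : ℝ := -(1 / (2 * cp ^ 2)) - 1 / (2 * cs ^ 2) with hLdef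
  set ε : ℝ := min 1 (min (cs/κ) (cp/κ)) with hεdef
  have hε : 0 < ε := by
    apply lt_min (by norm_num)
    exact lt_min (by positivity) (by positivity)
  set M : ℝ := CS γs γp n / κ^2 + phiCst γp n / cp^2 + |Ac γp n| / cp^2 + 1 with hMdef
  have hM : 0 < M := by
    have h1 : 0 ≤ CS γs γp n / κ^2 := div_nonneg (CS_nonneg γs γp hγs hγp n) (by positivity)
    have h2 : 0 ≤ phiCst γp n / cp^2 := div_nonneg (phiCst_nonneg γp hγp n) (by positivity)
    have h3 : 0 ≤ |Ac γp n| / cp^2 := div_nonneg (abs_nonneg _) (by positivity)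
    rw [hMdef]; linarith
  have keybound : ∀ r : ℝ, 0 < r → r < ε → |etaF κ cs cp 1 n r - L| ≤ M * r ^ 2 := by
    intro r hr hrε
    have hr0 : (0:ℝ) ≤ r := hr.le
    have hr1 : r ≤ 1 := le_of_lt (lt_of_lt_of_le hrε (min_le_left _ _))
    have hrs : r ≤ cs/κ :=
      le_of_lt (lt_of_lt_of_le hrε (le_trans (min_le_right _ _) (min_le_left _ _)))
    have hrp : r ≤ cp/κ :=
      le_of_lt (lt_of_lt_of_le hrε (le_trans (min_le_right _ _) (min_le_right _ _)))
    have hsr : γs * r ≤ 1 := by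
      calc γs * r ≤ γs * (cs/κ) := mul_le_mul_of_nonneg_left hrs hγs.le
        _ = 1 := by rw [hγsdef]; field_simp
    have hpr : γp * r ≤ 1 := by
      calc γp * r ≤ γp * (cp/κ) := mul_le_mul_of_nonneg_left hrp hγp.le
        _ = 1 := by rw [hγpdef]; field_simp
    have hehta : etaF κ cs cp 1 n r =
        1/(κ^2*r^2) * sumChi n (fun j => phiF γs j r - phiF γp j r)
          + 1/cp^2 * phiF γp n r := by
      rw [etaF]; norm_num; rfl
    have heq : etaF κ cs cp 1 n r - L =
        (sumChi n (fun j => phiF γs j r - phiF γp j r) - ((γp^2 - γs^2)/2) * r^2) * (1/(κ^2*r^2))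
        + (phiF γp n r - (-1 + Ac γp n * r^2)) * (1/cp^2)
        + Ac γp n * r^2 / cp^2 := by
      rw [hehta, hLdef, hγpdef, hγsdef]
      field_simp
      ring
    have hE := sum_expand γs γp hγs hγp n r hr hr1 hsr hpr
    have hD := phi_expand γp hγp n r hr hr1 hpr
    have b1 : |(sumChi n (fun j => phiF γs j r - phiF γp j r) - ((γp^2 - γs^2)/2) * r^2) * (1/(κ^2*r^2))|
        ≤ (CS γs γp n * r^4) * (1/(κ^2*r^2)) :=
      abs_mul_le hE (le_of_eq (abs_of_nonneg (by positivity)))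
    have b2 : |(phiF γp n r - (-1 + Ac γp n * r^2)) * (1/cp^2)|
        ≤ (phiCst γp n * r^4) * (1/cp^2) :=
      abs_mul_le hD (le_of_eq (abs_of_nonneg (by positivity)))
    have b3 : |Ac γp n * r^2 / cp^2| = |Ac γp n| * r^2 / cp^2 := by
      rw [abs_div, abs_mul, abs_of_nonneg (by positivity : (0:ℝ) ≤ r^2),
        abs_of_nonneg (by positivity : (0:ℝ) ≤ cp^2)]
    have hr2 : r^2 ≤ 1 := pow_le_one₀ hr0 hr1
    have hr42 : r^4 ≤ r^2 := by nlinarith [sq_nonneg r]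
    have e1 : (CS γs γp n * r^4) * (1/(κ^2*r^2)) = CS γs γp n / κ^2 * r^2 := by
      field_simp
    calc |etaF κ cs cp 1 n r - L|
        = |(sumChi n (fun j => phiF γs j r - phiF γp j r) - ((γp^2 - γs^2)/2) * r^2) * (1/(κ^2*r^2))
          + (phiF γp n r - (-1 + Ac γp n * r^2)) * (1/cp^2)
          + Ac γp n * r^2 / cp^2| := by rw [heq]
      _ ≤ |(sumChi n (fun j => phiF γs j r - phiF γp j r) - ((γp^2 - γs^2)/2) * r^2) * (1/(κ^2*r^2))
          + (phiF γp n r - (-1 + Ac γp n * r^2)) * (1/cp^2)|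
          + |Ac γp n * r^2 / cp^2| := abs_add_le _ _
      _ ≤ (|(sumChi n (fun j => phiF γs j r - phiF γp j r) - ((γp^2 - γs^2)/2) * r^2) * (1/(κ^2*r^2))|
          + |(phiF γp n r - (-1 + Ac γp n * r^2)) * (1/cp^2)|)
          + |Ac γp n * r^2 / cp^2| := by
        have := abs_add_le ((sumChi n (fun j => phiF γs j r - phiF γp j r) - ((γp^2 - γs^2)/2) * r^2) * (1/(κ^2*r^2)))
          ((phiF γp n r - (-1 + Ac γp n * r^2)) * (1/cp^2))
        linarith
      _ ≤ ((CS γs γp n * r^4) * (1/(κ^2*r^2)) + (phiCst γp n * r^4) * (1/cp^2))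
          + |Ac γp n| * r^2 / cp^2 := by
        rw [b3]; linarith
      _ ≤ M * r^2 := by
        rw [e1, hMdef]
        have t1 : 0 ≤ phiCst γp n / cp^2 * (r^2 - r^4) :=
          mul_nonneg (div_nonneg (phiCst_nonneg _ hγp n) (by positivity)) (by linarith)
        have t2 : 0 ≤ r^2 := sq_nonneg r
        have u1 : phiCst γp n * r^4 * (1/cp^2) = phiCst γp n / cp^2 * r^4 := by ring
        have u2 : (CS γs γp n / κ^2 + phiCst γp n / cp^2 + |Ac γp n| / cp^2 + 1) * r^2
            = CS γs γp n / κ^2 * r^2 + phiCst γp n / cp^2 * r^2 + |Ac γp n| / cp^2 * r^2 + r^2 := by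
          ring
        have u3 : |Ac γp n| * r^2 / cp^2 = |Ac γp n| / cp^2 * r^2 := by ring
        have t1' : 0 ≤ phiCst γp n / cp^2 * r^2 - phiCst γp n / cp^2 * r^4 := by
          have u4 : phiCst γp n / cp^2 * (r^2 - r^4)
              = phiCst γp n / cp^2 * r^2 - phiCst γp n / cp^2 * r^4 := by ring
          linarith [u4 ▸ t1]
        rw [u1, u2, u3]
        linarith [t1', t2]
  constructor
  · exact ⟨ε, hε, M, hM, keybound⟩
  · have hb : ∀ᶠ r in nhdsWithin (0:ℝ) (Set.Ioi 0), ‖etaF κ cs cp 1 n r - L‖ ≤ M * r^2 := by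
      have hmem : Set.Ioo (0:ℝ) ε ∈ nhdsWithin (0:ℝ) (Set.Ioi 0) :=
        Ioo_mem_nhdsGT_of_mem ⟨le_refl 0, hε⟩
      apply Filter.eventually_of_mem hmem
      intro r hrmem
      rw [Real.norm_eq_abs]
      exact keybound r hrmem.1 hrmem.2
    have hM0 : Tendsto (fun r : ℝ => M * r^2) (nhdsWithin (0:ℝ) (Set.Ioi 0)) (nhds 0) := by
      have h1 : Tendsto (fun r : ℝ => M * r^2) (nhds 0) (nhds (M * 0^2)) :=
        (continuous_const.mul (continuous_pow 2)).tendsto 0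
      have h2 : M * (0:ℝ)^2 = 0 := by ring
      rw [h2] at h1
      exact h1.mono_left nhdsWithin_le_nhds
    have h0 : Tendsto (fun r => etaF κ cs cp 1 n r - L) (nhdsWithin (0:ℝ) (Set.Ioi 0)) (nhds 0) :=
      squeeze_zero_norm' hb hM0
    have h1 := h0.add_const L
    simp only [sub_add_cancel, zero_add] at h1
    exact h1
end

section
/- For every κ > 0 and every n ∈ ℕ, ∫_0^∞ t² e^{−(κ+1)t} L_n(κt) dt = (2 + κn(κ(n−1) − 4))/(κ+1)^{n+3}. Consequently, the Fourier–Laguerre coefficients of f(t) = (t²/4) e^{2−t} satisfy f_n := ∫_0^∞ e^{−κt} L_n(κt) f(t) dt = (e²/4)(2 + κn(κ(n−1) − 4))/(κ+1)^{n+3}. -/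
open Real Filter MeasureTheory


lemma binom0 (n : ℕ) (z : ℝ) :
    ∑ k ∈ Finset.range (n + 1), (n.choose k : ℝ) * z ^ k = (1 + z) ^ n := by
  have := add_pow z 1 n
  simp only [one_pow, mul_one] at this
  rw [add_comm 1 z, this]
  exact Finset.sum_congr rfl fun k _ => by ring

lemma binom1 (m : ℕ) (z : ℝ) :
    ∑ k ∈ Finset.range (m + 1 + 1), (k : ℝ) * ((m+1).choose k : ℝ) * z ^ k
      = ((m:ℝ) + 1) * z * (1 + z) ^ m := by
  rw [Finset.sum_range_succ']
  push_cast
  simp only [zero_mul, pow_zero, mul_one, add_zero]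
  have h : ∀ j : ℕ, ((j:ℝ)+1) * ((m+1).choose (j+1) : ℝ) = (m+1 : ℝ) * (m.choose j : ℝ) := by
    intro j
    have h2 : ((m+1) * m.choose j : ℕ) = ((m+1).choose (j+1) * (j+1) : ℕ) :=
      Nat.add_one_mul_choose_eq m j
    have := congrArg (fun x : ℕ => (x : ℝ)) h2
    push_cast at this
    linarith
  calc ∑ j ∈ Finset.range (m+1), ((j:ℝ)+1) * ((m+1).choose (j+1) : ℝ) * z ^ (j+1)
      = ∑ j ∈ Finset.range (m+1), (m+1:ℝ) * z * ((m.choose j : ℝ) * z ^ j) := by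
        refine Finset.sum_congr rfl fun j _ => ?_
        rw [pow_succ]
        rw [show ((j:ℝ)+1) * ((m+1).choose (j+1) : ℝ) * (z ^ j * z)
          = (((j:ℝ)+1) * ((m+1).choose (j+1) : ℝ)) * (z ^ j * z) by ring, h j]
        ring
    _ = (m+1:ℝ) * z * (1+z)^m := by rw [← Finset.mul_sum, binom0]

lemma binom2 (m : ℕ) (z : ℝ) :
    ∑ k ∈ Finset.range (m + 1 + 1 + 1), (k : ℝ) * ((k:ℝ) - 1) * ((m+1+1).choose k : ℝ) * z ^ k
      = ((m:ℝ) + 2) * ((m:ℝ) + 1) * z ^ 2 * (1 + z) ^ m := by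
  rw [Finset.sum_range_succ', Finset.sum_range_succ']
  push_cast
  have h : ∀ j : ℕ, ((j:ℝ)+2) * ((m+2).choose (j+2) : ℝ)
      = (m+2:ℝ) * ((m+1).choose (j+1) : ℝ) := by
    intro j
    have h1 : ((m+2) * (m+1).choose (j+1) : ℕ) = ((m+2).choose (j+2) * (j+2) : ℕ) :=
      Nat.add_one_mul_choose_eq (m+1) (j+1)
    have := congrArg (fun x : ℕ => (x : ℝ)) h1
    push_cast at this
    linarith
  have h2 : ∀ j : ℕ, ((j:ℝ)+1) * ((m+1).choose (j+1) : ℝ) = (m+1 : ℝ) * (m.choose j : ℝ) := by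
    intro j
    have hh : ((m+1) * m.choose j : ℕ) = ((m+1).choose (j+1) * (j+1) : ℕ) :=
      Nat.add_one_mul_choose_eq m j
    have := congrArg (fun x : ℕ => (x : ℝ)) hh
    push_cast at this
    linarith
  have step : ∀ j : ℕ, ((j:ℝ)+1+1) * ((j:ℝ)+1+1-1) * ((m+1+1).choose (j+1+1) : ℝ) * z ^ (j+1+1)
      = (m+2:ℝ)*(m+1:ℝ)*z^2 * ((m.choose j : ℝ) * z ^ j) := by
    intro j
    have e1 := h j
    have e2 := h2 j
    rw [show ((j:ℝ)+1+1) * ((j:ℝ)+1+1-1) * ((m+1+1).choose (j+1+1) : ℝ) * z ^ (j+1+1)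
      = (((j:ℝ)+2) * ((m+2).choose (j+2) : ℝ)) * (((j:ℝ)+1) * (z^j * z^2)) by ring_nf, e1]
    rw [show (m+2:ℝ) * ((m+1).choose (j+1) : ℝ) * (((j:ℝ)+1) * (z^j * z^2))
      = (m+2:ℝ) * ((((j:ℝ)+1) * ((m+1).choose (j+1) : ℝ))) * (z^j * z^2) by ring, e2]
    ring
  rw [Finset.sum_congr rfl fun j _ => step j, ← Finset.mul_sum, binom0]
  ring

lemma binom1' (n : ℕ) (z : ℝ) :
    (1 + z) * ∑ k ∈ Finset.range (n + 1), (k : ℝ) * (n.choose k : ℝ) * z ^ k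
      = (n : ℝ) * z * (1 + z) ^ n := by
  cases n with
  | zero => simp
  | succ m =>
    rw [binom1]
    push_cast
    ring

lemma binom2' (n : ℕ) (z : ℝ) :
    (1 + z) ^ 2 * ∑ k ∈ Finset.range (n + 1), (k : ℝ) * ((k:ℝ) - 1) * (n.choose k : ℝ) * z ^ k
      = (n : ℝ) * ((n:ℝ) - 1) * z ^ 2 * (1 + z) ^ n := by
  match n with
  | 0 => simp
  | 1 => norm_num [Finset.sum_range_succ]
  | (m+1+1) =>
    rw [binom2]
    push_cast
    ring

lemma keySum (n : ℕ) (z : ℝ) :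
    (1 + z) ^ 2 * ∑ k ∈ Finset.range (n + 1),
        ((k:ℝ) + 1) * ((k:ℝ) + 2) * (n.choose k : ℝ) * z ^ k
      = ((n:ℝ) * ((n:ℝ) - 1) * z ^ 2 + 4 * (n:ℝ) * z * (1 + z) + 2 * (1 + z) ^ 2)
          * (1 + z) ^ n := by
  have hsplit : ∑ k ∈ Finset.range (n + 1),
      ((k:ℝ) + 1) * ((k:ℝ) + 2) * (n.choose k : ℝ) * z ^ k
    = (∑ k ∈ Finset.range (n + 1), (k : ℝ) * ((k:ℝ) - 1) * (n.choose k : ℝ) * z ^ k)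
      + 4 * (∑ k ∈ Finset.range (n + 1), (k : ℝ) * (n.choose k : ℝ) * z ^ k)
      + 2 * (∑ k ∈ Finset.range (n + 1), (n.choose k : ℝ) * z ^ k) := by
    rw [Finset.mul_sum, Finset.mul_sum, ← Finset.sum_add_distrib, ← Finset.sum_add_distrib]
    exact Finset.sum_congr rfl fun k _ => by ring
  rw [hsplit, mul_add, mul_add, binom2', binom0]
  have h1 := binom1' n z
  nlinarith [h1, sq_nonneg (1+z)]


lemma integrable_pow_exp (m : ℕ) {r : ℝ} (hr : 0 < r) :
    IntegrableOn (fun t : ℝ => t ^ m * Real.exp (-(r * t))) (Set.Ioi 0) := by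
  have := integrableOn_rpow_mul_exp_neg_mul_rpow
    (p := 1) (s := m) (b := r) (lt_of_lt_of_le neg_one_lt_zero (Nat.cast_nonneg m)) zero_lt_one hr
  refine this.congr_fun (fun t ht => ?_) measurableSet_Ioi
  dsimp only
  rw [Real.rpow_natCast, Real.rpow_one, neg_mul]

lemma int_pow_exp (m : ℕ) {r : ℝ} (hr : 0 < r) :
    ∫ t in Set.Ioi (0:ℝ), t ^ m * Real.exp (-(r * t))
      = (m.factorial : ℝ) / r ^ (m + 1) := by
  have h := Real.integral_rpow_mul_exp_neg_mul_Ioi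
    (a := (m:ℝ) + 1) (r := r) (by positivity) hr
  have e1 : ∀ t : ℝ, t ^ (((m:ℝ)+1) - 1) = t ^ ((m:ℝ)) := by intro t; norm_num
  rw [show ∫ t in Set.Ioi (0:ℝ), t ^ m * Real.exp (-(r * t))
      = ∫ t in Set.Ioi (0:ℝ), t ^ (((m:ℝ)+1) - 1) * Real.exp (-(r * t)) from ?_, h]
  · rw [show ((m:ℝ)+1) = ((m+1 : ℕ) : ℝ) by push_cast; ring, Real.rpow_natCast]
    push_cast
    rw [Real.Gamma_nat_eq_factorial, one_div, inv_pow]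
    field_simp
  · refine setIntegral_congr_fun measurableSet_Ioi (fun t ht => ?_)
    rw [e1, Real.rpow_natCast]

lemma sumEval (κ : ℝ) (hκ : 0 < κ) (n : ℕ) :
    ∑ k ∈ Finset.range (n + 1),
        ((-1:ℝ) ^ k * (n.choose k : ℝ) * κ ^ k / (k.factorial : ℝ))
          * (((k+2).factorial : ℝ) / (κ + 1) ^ (k + 2 + 1))
      = (2 + κ * (n : ℝ) * (κ * ((n : ℝ) - 1) - 4)) / (κ + 1) ^ (n + 3) := by
  have hA : (0:ℝ) < κ + 1 := by linarith
  have hA' : (κ:ℝ) + 1 ≠ 0 := ne_of_gt hA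
  set z : ℝ := -κ / (κ + 1) with hz
  have h1z : 1 + z = 1 / (κ + 1) := by rw [hz]; field_simp; ring
  have hterm : ∀ k : ℕ,
      ((-1:ℝ) ^ k * (n.choose k : ℝ) * κ ^ k / (k.factorial : ℝ))
          * (((k+2).factorial : ℝ) / (κ + 1) ^ (k + 2 + 1))
      = (((k:ℝ) + 1) * ((k:ℝ) + 2) * (n.choose k : ℝ) * z ^ k) * (1 / (κ + 1) ^ 3) := by
    intro k
    have hf : (((k+2).factorial : ℕ) : ℝ) = ((k:ℝ)+1) * ((k:ℝ)+2) * (k.factorial : ℝ) := by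
      rw [show k + 2 = (k+1)+1 from rfl, Nat.factorial_succ, Nat.factorial_succ]
      push_cast; ring
    have hzk : z ^ k = (-1:ℝ)^k * κ ^ k / (κ+1)^k := by
      rw [hz, div_pow, neg_pow κ k]
      try ring
    have hkf : (k.factorial : ℝ) ≠ 0 := Nat.cast_ne_zero.mpr k.factorial_ne_zero
    rw [hf, hzk, pow_add, pow_add]
    field_simp
    try ring
  rw [Finset.sum_congr rfl fun k _ => hterm k, ← Finset.sum_mul]
  have hKS := keySum n z
  rw [h1z] at hKS
  have hzval : z = -κ / (κ + 1) := hz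
  set T := ∑ k ∈ Finset.range (n + 1),
      ((k:ℝ) + 1) * ((k:ℝ) + 2) * (n.choose k : ℝ) * z ^ k with hT
  rw [hzval] at hKS
  have hpow : ((κ+1):ℝ)^n ≠ 0 := pow_ne_zero _ hA'
  field_simp at hKS
  have h6 : ((κ+1):ℝ)^6 ≠ 0 := by positivity
  have hTv : T = ((n:ℝ)*((n:ℝ)-1)*κ^2 - 4*(n:ℝ)*κ + 2) / (κ+1)^n := by
    rw [eq_div_iff hpow]
    apply mul_right_cancel₀ h6
    have hinv : (1 / (κ + 1)) ^ n * (κ + 1) ^ n = 1 := by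
      rw [← mul_pow, one_div, inv_mul_cancel₀ hA', one_pow]
    linear_combination (κ + 1) ^ n * (κ + 1) ^ 6 * hKS
      + (κ * (n:ℝ) * (κ * ((n:ℝ) - 1) + -4) + 2) * (κ + 1) ^ 6 * hinv
  rw [hTv, pow_add]
  field_simp
  ring

/-- ∫₀^∞ t² e^{−(κ+1)t} L_n(κt) dt = (2 + κn(κ(n−1) − 4))/(κ+1)^{n+3}, and the
Fourier–Laguerre coefficients of f(t) = (t²/4)e^{2−t} are
f_n = (e²/4)(2 + κn(κ(n−1) − 4))/(κ+1)^{n+3}. -/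
theorem laguerre_coefficients_of_t_sq_exp (κ : ℝ) (hκ : 0 < κ) (n : ℕ) :
    (∫ t in Set.Ioi (0 : ℝ), t ^ 2 * Real.exp (-(κ + 1) * t) * lagPoly n (κ * t))
      = (2 + κ * (n : ℝ) * (κ * ((n : ℝ) - 1) - 4)) / (κ + 1) ^ (n + 3) ∧
    (∫ t in Set.Ioi (0 : ℝ),
        Real.exp (-κ * t) * lagPoly n (κ * t) * (t ^ 2 / 4 * Real.exp (2 - t)))
      = Real.exp 2 / 4 * (2 + κ * (n : ℝ) * (κ * ((n : ℝ) - 1) - 4)) / (κ + 1) ^ (n + 3) := by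
  have hA : (0:ℝ) < κ + 1 := by linarith
  have hint : ∀ t : ℝ, t ^ 2 * Real.exp (-(κ + 1) * t) * lagPoly n (κ * t)
      = ∑ k ∈ Finset.range (n + 1),
          ((-1:ℝ) ^ k * (n.choose k : ℝ) * κ ^ k / (k.factorial : ℝ))
            * (t ^ (k + 2) * Real.exp (-((κ + 1) * t))) := by
    intro t
    rw [lagPoly, Finset.mul_sum, neg_mul]
    refine Finset.sum_congr rfl fun k _ => ?_
    rw [mul_pow]
    ring
  have h1 : (∫ t in Set.Ioi (0 : ℝ), t ^ 2 * Real.exp (-(κ + 1) * t) * lagPoly n (κ * t))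
      = (2 + κ * (n : ℝ) * (κ * ((n : ℝ) - 1) - 4)) / (κ + 1) ^ (n + 3) := by
    rw [show (fun t : ℝ => t ^ 2 * Real.exp (-(κ + 1) * t) * lagPoly n (κ * t))
        = fun t : ℝ => ∑ k ∈ Finset.range (n + 1),
          ((-1:ℝ) ^ k * (n.choose k : ℝ) * κ ^ k / (k.factorial : ℝ))
            * (t ^ (k + 2) * Real.exp (-((κ + 1) * t))) from funext hint]
    rw [MeasureTheory.integral_finset_sum _ (fun k _ =>
      ((integrable_pow_exp (k + 2) hA).const_mul _))]
    rw [Finset.sum_congr rfl fun k _ => by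
      rw [integral_const_mul, int_pow_exp (k + 2) hA]]
    exact sumEval κ hκ n
  refine ⟨h1, ?_⟩
  have h2 : ∀ t : ℝ,
      Real.exp (-κ * t) * lagPoly n (κ * t) * (t ^ 2 / 4 * Real.exp (2 - t))
      = Real.exp 2 / 4 * (t ^ 2 * Real.exp (-(κ + 1) * t) * lagPoly n (κ * t)) := by
    intro t
    rw [show (2 : ℝ) - t = 2 + (-t) by ring, Real.exp_add,
      show -(κ + 1) * t = -κ * t + (-t) by ring, Real.exp_add]
    ring
  rw [show (fun t : ℝ => Real.exp (-κ * t) * lagPoly n (κ * t) * (t ^ 2 / 4 * Real.exp (2 - t)))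
      = fun t : ℝ => Real.exp 2 / 4 * (t ^ 2 * Real.exp (-(κ + 1) * t) * lagPoly n (κ * t))
      from funext h2]
  rw [integral_const_mul, h1, mul_div_assoc]
end
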